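/- arXiv:2308.00312 — 11 statements merged into one kernel-verified Lean document; each statement's English description precedes it below -/
import Mathlib

section
/- Let (Ω, μ) and (Δ, ν) be measure spaces, let 1 < p < ∞ with conjugate index q (1/p + 1/q = 1), and let X be a Banach space over 𝕂 (ℝ or ℂ). Let ({f_α}_{α∈Ω}, {τ_α}_{α∈Ω}) and ({g_β}_{β∈Δ}, {ω_β}_{β∈Δ}) be continuous p-Schauder frames for X. Then for every x ∈ X with x ≠ 0, μ(supp(θ_f x))^{1/p} · ν(supp(θ_g x))^{1/q} ≥ 1 / sup_{α∈Ω, β∈Δ} |f_α(ω_β)|. -/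
open MeasureTheory ENNReal

/-- **Functional Continuous Uncertainty Principle** (first inequality).
If `(f, τ)` and `(g, ω)` are continuous p-Schauder frames for a Banach space `X`,
then for every nonzero `x`,
`μ(supp θ_f x)^(1/p) * ν(supp θ_g x)^(1/q) ≥ 1 / sup_{α,β} |f_α(ω_β)|`. -/
theorem functional_continuous_uncertainty_first
    {𝕂 : Type*} [RCLike 𝕂]
    {X : Type*} [NormedAddCommGroup X] [NormedSpace 𝕂 X] [CompleteSpace X]
    {Ω Δ : Type*} [MeasurableSpace Ω] [MeasurableSpace Δ]
    (μ : Measure Ω) (ν : Measure Δ)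
    (p q : ℝ) (hp : 1 < p) (hpq : 1 / p + 1 / q = 1)
    (f : Ω → X →L[𝕂] 𝕂) (τ : Ω → X)
    (g : Δ → X →L[𝕂] 𝕂) (ω : Δ → X)
    -- `(f, τ)` is a continuous p-Schauder frame for `X` :
    (hf_meas : ∀ x : X, StronglyMeasurable fun α : Ω => f α x)
    (hf_norm : ∀ x : X, ‖x‖ ^ p = ∫ α, ‖f α x‖ ^ p ∂μ)
    (hf_int : ∀ x : X, ∀ φ : X →L[𝕂] 𝕂, Integrable (fun α : Ω => f α x * φ (τ α)) μ)
    (hf_rec : ∀ x : X, ∀ φ : X →L[𝕂] 𝕂, φ x = ∫ α, f α x * φ (τ α) ∂μ)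
    -- `(g, ω)` is a continuous p-Schauder frame for `X` :
    (hg_meas : ∀ x : X, StronglyMeasurable fun β : Δ => g β x)
    (hg_norm : ∀ x : X, ‖x‖ ^ p = ∫ β, ‖g β x‖ ^ p ∂ν)
    (hg_int : ∀ x : X, ∀ φ : X →L[𝕂] 𝕂, Integrable (fun β : Δ => g β x * φ (ω β)) ν)
    (hg_rec : ∀ x : X, ∀ φ : X →L[𝕂] 𝕂, φ x = ∫ β, g β x * φ (ω β) ∂ν)
    (x : X) (hx : x ≠ 0) :
    1 / (⨆ (α : Ω) (β : Δ), (‖f α (ω β)‖₊ : ℝ≥0∞)) ≤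
      μ {α : Ω | f α x ≠ 0} ^ (1 / p) * ν {β : Δ | g β x ≠ 0} ^ (1 / q) := by
  set M : ℝ≥0∞ := ⨆ (α : Ω) (β : Δ), (‖f α (ω β)‖₊ : ℝ≥0∞) with hM
  set S : Set Ω := {α : Ω | f α x ≠ 0} with hSdef
  set T : Set Δ := {β : Δ | g β x ≠ 0} with hTdef
  by_cases hMtop : M = ∞
  · simp [hMtop]
  have hp0 : (0 : ℝ) < p := lt_trans one_pos hp
  have hconj : Real.HolderConjugate p q := Real.holderConjugate_iff.mpr ⟨hp, by rw [← one_div, ← one_div]; exact hpq⟩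
  have hq0 : (0 : ℝ) < q := hconj.symm.pos
  have hxpos : (0 : ℝ) < ‖x‖ := norm_pos_iff.mpr hx
  have hxp : (0 : ℝ) < ‖x‖ ^ p := Real.rpow_pos_of_pos hxpos p
  -- measurability of the supports
  have hS : MeasurableSet S := by
    have h : S = (fun α => f α x) ⁻¹' ({0}ᶜ) := by ext α; simp [hSdef]
    rw [h]
    exact (hf_meas x).measurable (measurableSet_singleton (0 : 𝕂)).compl
  have hT : MeasurableSet T := by
    have h : T = (fun β => g β x) ⁻¹' ({0}ᶜ) := by ext β; simp [hTdef]
    rw [h]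
    exact (hg_meas x).measurable (measurableSet_singleton (0 : 𝕂)).compl
  -- integrability of the norm-power functions
  have hgi : Integrable (fun β => ‖g β x‖ ^ p) ν := by
    by_contra h
    have h2 := hg_norm x
    rw [integral_undef h] at h2
    exact absurd h2 (ne_of_gt hxp)
  have hfi : Integrable (fun α => ‖f α x‖ ^ p) μ := by
    by_contra h
    have h2 := hf_norm x
    rw [integral_undef h] at h2
    exact absurd h2 (ne_of_gt hxp)
  -- the lintegral versions of the norm identities
  have hgl : ∫⁻ β, (‖g β x‖₊ : ℝ≥0∞) ^ p ∂ν = ENNReal.ofReal (‖x‖ ^ p) := by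
    rw [hg_norm x, ofReal_integral_eq_lintegral_ofReal hgi
      (Filter.Eventually.of_forall fun β => Real.rpow_nonneg (norm_nonneg _) p)]
    congr 1
    ext β
    rw [← enorm_eq_nnnorm, ← ofReal_norm, ← ENNReal.ofReal_rpow_of_nonneg (norm_nonneg _) hp0.le]
  have hfl : ∫⁻ α, (‖f α x‖₊ : ℝ≥0∞) ^ p ∂μ = ENNReal.ofReal (‖x‖ ^ p) := by
    rw [hf_norm x, ofReal_integral_eq_lintegral_ofReal hfi
      (Filter.Eventually.of_forall fun α => Real.rpow_nonneg (norm_nonneg _) p)]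
    congr 1
    ext α
    rw [← enorm_eq_nnnorm, ← ofReal_norm, ← ENNReal.ofReal_rpow_of_nonneg (norm_nonneg _) hp0.le]
  -- key pointwise bound: for every α, ‖f α x‖ ≤ M * ν T ^ (1/q) * ‖x‖
  have key : ∀ α : Ω, (‖f α x‖₊ : ℝ≥0∞) ≤ M * ν T ^ (1 / q) * ENNReal.ofReal ‖x‖ := by
    intro α
    set G : Δ → ℝ≥0∞ := fun b => (‖g b x‖₊ : ℝ≥0∞) with hG
    set I : Δ → ℝ≥0∞ := T.indicator 1 with hI
    have hGm : Measurable G := (hg_meas x).measurable.enorm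
    have hIm : Measurable I := measurable_one.indicator hT
    have h1 : (‖f α x‖₊ : ℝ≥0∞) ≤ ∫⁻ β, G β * (‖f α (ω β)‖₊ : ℝ≥0∞) ∂ν := by
      calc (‖f α x‖₊ : ℝ≥0∞) = (‖∫ β, g β x * f α (ω β) ∂ν‖₊ : ℝ≥0∞) := by
            rw [← hg_rec x (f α)]
        _ ≤ ∫⁻ β, (‖g β x * f α (ω β)‖₊ : ℝ≥0∞) ∂ν := enorm_integral_le_lintegral_enorm _
        _ = ∫⁻ β, G β * (‖f α (ω β)‖₊ : ℝ≥0∞) ∂ν := by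
            simp_rw [nnnorm_mul, ENNReal.coe_mul]; rfl
    have h2 : ∀ β : Δ, G β * (‖f α (ω β)‖₊ : ℝ≥0∞) ≤ G β * I β * M := by
      intro β
      by_cases hβ : β ∈ T
      · simp only [hI, Set.indicator_of_mem hβ, Pi.one_apply, mul_one]
        exact mul_le_mul_right (le_iSup₂ (f := fun a b => (‖f a (ω b)‖₊ : ℝ≥0∞)) α β) _
      · have hg0 : g β x = 0 := by simpa [hTdef] using hβ
        simp [hG, hg0]
    have h3 : ∫⁻ β, G β * I β ∂ν ≤
        (∫⁻ β, G β ^ p ∂ν) ^ (1 / p) * (∫⁻ β, I β ^ q ∂ν) ^ (1 / q) := by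
      simpa [Pi.mul_apply] using
        ENNReal.lintegral_mul_le_Lp_mul_Lq ν hconj hGm.aemeasurable hIm.aemeasurable
    have h4 : (∫⁻ β, G β ^ p ∂ν) ^ (1 / p) = ENNReal.ofReal ‖x‖ := by
      rw [hG]
      rw [hgl, ← ENNReal.ofReal_rpow_of_nonneg (norm_nonneg _) hp0.le, ← ENNReal.rpow_mul,
        mul_one_div_cancel (ne_of_gt hp0), ENNReal.rpow_one]
    have h5 : (∫⁻ β, I β ^ q ∂ν) ^ (1 / q) = ν T ^ (1 / q) := by
      have he : ∀ β : Δ, I β ^ q = I β := by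
        intro β
        by_cases hβ : β ∈ T
        · simp [hI, Set.indicator_of_mem hβ]
        · simp [hI, Set.indicator_of_notMem hβ, ENNReal.zero_rpow_of_pos hq0]
      simp_rw [he]
      rw [hI, lintegral_indicator_one hT]
    calc (‖f α x‖₊ : ℝ≥0∞)
        ≤ ∫⁻ β, G β * (‖f α (ω β)‖₊ : ℝ≥0∞) ∂ν := h1
      _ ≤ ∫⁻ β, G β * I β * M ∂ν := lintegral_mono h2
      _ = (∫⁻ β, G β * I β ∂ν) * M :=
          lintegral_mul_const'' _ (hGm.mul hIm).aemeasurable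
      _ ≤ (ENNReal.ofReal ‖x‖ * ν T ^ (1 / q)) * M := by
          refine mul_le_mul_left ?_ M
          calc _ ≤ _ := h3
            _ = ENNReal.ofReal ‖x‖ * ν T ^ (1 / q) := by rw [h4, h5]
      _ = M * ν T ^ (1 / q) * ENNReal.ofReal ‖x‖ := by ring
  -- main estimate
  have main : ENNReal.ofReal (‖x‖ ^ p) ≤
      (M * ν T ^ (1 / q) * ENNReal.ofReal ‖x‖) ^ p * μ S := by
    rw [← hfl]
    calc ∫⁻ α, (‖f α x‖₊ : ℝ≥0∞) ^ p ∂μ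
        ≤ ∫⁻ α, S.indicator (fun _ => (M * ν T ^ (1 / q) * ENNReal.ofReal ‖x‖) ^ p) α ∂μ := by
          refine lintegral_mono fun α => ?_
          by_cases hα : α ∈ S
          · rw [Set.indicator_of_mem hα]
            exact ENNReal.rpow_le_rpow (key α) hp0.le
          · have hf0 : f α x = 0 := by simpa [hSdef] using hα
            simp [hf0, Set.indicator_of_notMem hα, ENNReal.zero_rpow_of_pos hp0]
      _ = (M * ν T ^ (1 / q) * ENNReal.ofReal ‖x‖) ^ p * μ S := by
          rw [lintegral_indicator hS, setLIntegral_const]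
  -- cancel the ‖x‖ factor
  have hone : (1 : ℝ≥0∞) ≤ (M * ν T ^ (1 / q)) ^ p * μ S := by
    have ha0 : (ENNReal.ofReal ‖x‖) ^ p ≠ 0 :=
      (ENNReal.rpow_pos (ENNReal.ofReal_pos.mpr hxpos) ENNReal.ofReal_ne_top).ne'
    have hat : (ENNReal.ofReal ‖x‖) ^ p ≠ ∞ := by
      exact ENNReal.rpow_ne_top_of_nonneg hp0.le ENNReal.ofReal_ne_top
    have hmain2 : 1 * (ENNReal.ofReal ‖x‖) ^ p ≤
        ((M * ν T ^ (1 / q)) ^ p * μ S) * (ENNReal.ofReal ‖x‖) ^ p := by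
      rw [one_mul]
      calc (ENNReal.ofReal ‖x‖) ^ p = ENNReal.ofReal (‖x‖ ^ p) := by
            rw [ENNReal.ofReal_rpow_of_nonneg (norm_nonneg _) hp0.le]
        _ ≤ (M * ν T ^ (1 / q) * ENNReal.ofReal ‖x‖) ^ p * μ S := main
        _ = ((M * ν T ^ (1 / q)) ^ p * μ S) * (ENNReal.ofReal ‖x‖) ^ p := by
            rw [ENNReal.mul_rpow_of_nonneg _ _ hp0.le]; ring
    exact (ENNReal.mul_le_mul_iff_left ha0 hat).mp hmain2
  -- take p-th roots
  have hone2 : (1 : ℝ≥0∞) ≤ M * ν T ^ (1 / q) * μ S ^ (1 / p) := by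
    calc (1 : ℝ≥0∞) = 1 ^ (1 / p) := by rw [ENNReal.one_rpow]
      _ ≤ ((M * ν T ^ (1 / q)) ^ p * μ S) ^ (1 / p) :=
          ENNReal.rpow_le_rpow hone (by positivity)
      _ = M * ν T ^ (1 / q) * μ S ^ (1 / p) := by
          rw [ENNReal.mul_rpow_of_nonneg _ _ (by positivity : (0:ℝ) ≤ 1 / p),
            ← ENNReal.rpow_mul, mul_one_div_cancel (ne_of_gt hp0), ENNReal.rpow_one]
  have hM0 : M ≠ 0 := by
    intro h0
    rw [h0, zero_mul, zero_mul] at hone2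
    exact absurd hone2 (by simp)
  rw [ENNReal.div_le_iff hM0 hMtop]
  calc (1 : ℝ≥0∞) ≤ M * ν T ^ (1 / q) * μ S ^ (1 / p) := hone2
    _ = μ S ^ (1 / p) * ν T ^ (1 / q) * M := by ring
end

section
/- Let (Ω, μ) and (Δ, ν) be measure spaces, let 1 < p < ∞ with conjugate index q (1/p + 1/q = 1), and let X be a Banach space over 𝕂 (ℝ or ℂ). Let ({f_α}_{α∈Ω}, {τ_α}_{α∈Ω}) and ({g_β}_{β∈Δ}, {ω_β}_{β∈Δ}) be continuous p-Schauder frames for X. Then for every x ∈ X with x ≠ 0, ν(supp(θ_g x))^{1/p} · μ(supp(θ_f x))^{1/q} ≥ 1 / sup_{α∈Ω, β∈Δ} |g_β(τ_α)|. -/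
open MeasureTheory ENNReal

/-- **Functional Continuous Uncertainty Principle** (second inequality).
If `(f, τ)` and `(g, ω)` are continuous p-Schauder frames for a Banach space `X`,
then for every nonzero `x`,
`ν(supp θ_g x)^(1/p) * μ(supp θ_f x)^(1/q) ≥ 1 / sup_{α,β} |g_β(τ_α)|`. -/
theorem functional_continuous_uncertainty_second
    {𝕂 : Type*} [RCLike 𝕂]
    {X : Type*} [NormedAddCommGroup X] [NormedSpace 𝕂 X] [CompleteSpace X]
    {Ω Δ : Type*} [MeasurableSpace Ω] [MeasurableSpace Δ]
    (μ : Measure Ω) (ν : Measure Δ)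
    (p q : ℝ) (hp : 1 < p) (hpq : 1 / p + 1 / q = 1)
    (f : Ω → X →L[𝕂] 𝕂) (τ : Ω → X)
    (g : Δ → X →L[𝕂] 𝕂) (ω : Δ → X)
    -- `(f, τ)` is a continuous p-Schauder frame for `X` :
    (hf_meas : ∀ x : X, StronglyMeasurable fun α : Ω => f α x)
    (hf_norm : ∀ x : X, ‖x‖ ^ p = ∫ α, ‖f α x‖ ^ p ∂μ)
    (hf_int : ∀ x : X, ∀ φ : X →L[𝕂] 𝕂, Integrable (fun α : Ω => f α x * φ (τ α)) μ)
    (hf_rec : ∀ x : X, ∀ φ : X →L[𝕂] 𝕂, φ x = ∫ α, f α x * φ (τ α) ∂μ)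
    -- `(g, ω)` is a continuous p-Schauder frame for `X` :
    (hg_meas : ∀ x : X, StronglyMeasurable fun β : Δ => g β x)
    (hg_norm : ∀ x : X, ‖x‖ ^ p = ∫ β, ‖g β x‖ ^ p ∂ν)
    (hg_int : ∀ x : X, ∀ φ : X →L[𝕂] 𝕂, Integrable (fun β : Δ => g β x * φ (ω β)) ν)
    (hg_rec : ∀ x : X, ∀ φ : X →L[𝕂] 𝕂, φ x = ∫ β, g β x * φ (ω β) ∂ν)
    (x : X) (hx : x ≠ 0) :
    1 / (⨆ (α : Ω) (β : Δ), (‖g β (τ α)‖₊ : ℝ≥0∞)) ≤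
      ν {β : Δ | g β x ≠ 0} ^ (1 / p) * μ {α : Ω | f α x ≠ 0} ^ (1 / q) := by

  classical
  have hp0 : (0:ℝ) < p := lt_trans one_pos hp
  have hc : p.HolderConjugate q := Real.holderConjugate_iff.mpr ⟨hp, by simpa [one_div] using hpq⟩
  have hq0 : (0:ℝ) < q := hc.symm.pos
  have hpne : p ≠ 0 := hc.ne_zero
  have hqne : q ≠ 0 := hc.symm.ne_zero
  set A : Set Ω := {α : Ω | f α x ≠ 0} with hAdef
  set B : Set Δ := {β : Δ | g β x ≠ 0} with hBdef
  set M := ⨆ (α : Ω) (β : Δ), (‖g β (τ α)‖₊ : ℝ≥0∞) with hMdef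
  have hA : MeasurableSet A := by
    have h : A = (fun α => f α x) ⁻¹' ({(0:𝕂)}ᶜ) := rfl
    rw [h]; exact (hf_meas x).measurable (measurableSet_singleton 0).compl
  have hB : MeasurableSet B := by
    have h : B = (fun β => g β x) ⁻¹' ({(0:𝕂)}ᶜ) := rfl
    rw [h]; exact (hg_meas x).measurable (measurableSet_singleton 0).compl
  set N := ENNReal.ofReal (‖x‖ ^ p) with hNdef
  have hxp : (0:ℝ) < ‖x‖ ^ p := Real.rpow_pos_of_pos (norm_pos_iff.mpr hx) p
  have hN0 : N ≠ 0 := by simp [hNdef, ENNReal.ofReal_eq_zero, not_le, hxp]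
  have hNt : N ≠ ⊤ := ENNReal.ofReal_ne_top
  have hFi : Integrable (fun α => ‖f α x‖ ^ p) μ := by
    by_contra h
    have h2 := hf_norm x
    rw [integral_undef h] at h2
    exact hxp.ne' h2
  have hGi : Integrable (fun β => ‖g β x‖ ^ p) ν := by
    by_contra h
    have h2 := hg_norm x
    rw [integral_undef h] at h2
    exact hxp.ne' h2
  have hNf : ∫⁻ α, (‖f α x‖₊ : ℝ≥0∞) ^ p ∂μ = N := by
    rw [hNdef, hf_norm x,
      ofReal_integral_eq_lintegral_ofReal hFi
        (Filter.Eventually.of_forall fun α => Real.rpow_nonneg (norm_nonneg _) p)]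
    refine lintegral_congr fun α => ?_
    rw [← enorm_eq_nnnorm, ← ofReal_norm, ← ENNReal.ofReal_rpow_of_nonneg (norm_nonneg _) hp0.le]
  have hNg : ∫⁻ β, (‖g β x‖₊ : ℝ≥0∞) ^ p ∂ν = N := by
    rw [hNdef, hg_norm x,
      ofReal_integral_eq_lintegral_ofReal hGi
        (Filter.Eventually.of_forall fun β => Real.rpow_nonneg (norm_nonneg _) p)]
    refine lintegral_congr fun β => ?_
    rw [← enorm_eq_nnnorm, ← ofReal_norm, ← ENNReal.ofReal_rpow_of_nonneg (norm_nonneg _) hp0.le]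
  have hFm : AEMeasurable (fun α => (‖f α x‖₊ : ℝ≥0∞)) μ :=
    (hf_meas x).aestronglyMeasurable.enorm
  -- key pointwise bound
  have key : ∀ β : Δ, (‖g β x‖₊ : ℝ≥0∞) ≤ N ^ (1/p) * (M * μ A ^ (1/q)) := by
    intro β
    have hrec := hf_rec x (g β)
    have hint := hf_int x (g β)
    have hGq : ∫⁻ α, (A.indicator (fun _ => M) α) ^ q ∂μ = M ^ q * μ A := by
      have hpt : ∀ α, (A.indicator (fun _ => M) α) ^ q = A.indicator (fun _ => M ^ q) α := by
        intro α
        by_cases hα : α ∈ A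
        · simp [hα]
        · simp [hα, ENNReal.zero_rpow_of_pos hq0]
      simp_rw [hpt]
      rw [lintegral_indicator hA, setLIntegral_const]
    calc (‖g β x‖₊ : ℝ≥0∞) = ENNReal.ofReal ‖g β x‖ := (ofReal_norm _).symm
      _ = ENNReal.ofReal ‖∫ α, f α x * (g β) (τ α) ∂μ‖ := by rw [← hrec]
      _ ≤ ENNReal.ofReal (∫ α, ‖f α x * (g β) (τ α)‖ ∂μ) :=
          ENNReal.ofReal_le_ofReal (norm_integral_le_integral_norm _)
      _ = ∫⁻ α, ENNReal.ofReal ‖f α x * (g β) (τ α)‖ ∂μ :=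
          ofReal_integral_eq_lintegral_ofReal hint.norm
            (Filter.Eventually.of_forall fun α => norm_nonneg _)
      _ = ∫⁻ α, (‖f α x‖₊ : ℝ≥0∞) * (‖(g β) (τ α)‖₊ : ℝ≥0∞) ∂μ := by
          simp_rw [norm_mul, ENNReal.ofReal_mul (norm_nonneg _), ofReal_norm, enorm_eq_nnnorm]
      _ ≤ ∫⁻ α, ((fun α => (‖f α x‖₊ : ℝ≥0∞)) * (A.indicator fun _ => M)) α ∂μ := by
          refine lintegral_mono fun α => ?_
          by_cases hα : f α x = 0
          · simp [hα]
          · have hmem : α ∈ A := hα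
            show (‖f α x‖₊ : ℝ≥0∞) * (‖(g β) (τ α)‖₊ : ℝ≥0∞)
                ≤ (‖f α x‖₊ : ℝ≥0∞) * A.indicator (fun _ => M) α
            rw [Set.indicator_of_mem hmem]
            refine mul_le_mul_right ?_ _
            rw [hMdef]
            exact le_iSup₂ (f := fun (α : Ω) (β : Δ) => (‖g β (τ α)‖₊ : ℝ≥0∞)) α β
      _ ≤ (∫⁻ α, (‖f α x‖₊ : ℝ≥0∞) ^ p ∂μ) ^ (1/p)
            * (∫⁻ α, (A.indicator (fun _ => M) α) ^ q ∂μ) ^ (1/q) :=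
          ENNReal.lintegral_mul_le_Lp_mul_Lq μ hc hFm
            ((measurable_const.indicator hA).aemeasurable)
      _ = N ^ (1/p) * (M ^ q * μ A) ^ (1/q) := by rw [hNf, hGq]
      _ = N ^ (1/p) * (M * μ A ^ (1/q)) := by
          rw [ENNReal.mul_rpow_of_nonneg _ _ (by positivity : (0:ℝ) ≤ 1/q),
            ← ENNReal.rpow_mul, mul_one_div_cancel hqne, ENNReal.rpow_one]
  -- integrate the p-th power of the bound over B
  have hmain : (1:ℝ≥0∞) * N ≤ (M ^ p * μ A ^ ((1/q) * p) * ν B) * N := by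
    rw [one_mul]
    calc N = ∫⁻ β, (‖g β x‖₊ : ℝ≥0∞) ^ p ∂ν := hNg.symm
      _ ≤ ∫⁻ β, B.indicator (fun _ => (N ^ (1/p) * (M * μ A ^ (1/q))) ^ p) β ∂ν := by
          refine lintegral_mono fun β => ?_
          by_cases hβ : g β x = 0
          · have hnm : β ∉ B := by simp [hBdef, hβ]
            rw [Set.indicator_of_notMem hnm]
            simp [hβ, ENNReal.zero_rpow_of_pos hp0]
          · have hmem : β ∈ B := hβ
            rw [Set.indicator_of_mem hmem]
            exact ENNReal.rpow_le_rpow (key β) hp0.le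
      _ = (N ^ (1/p) * (M * μ A ^ (1/q))) ^ p * ν B := by
          rw [lintegral_indicator hB, setLIntegral_const]
      _ = (M ^ p * μ A ^ ((1/q) * p) * ν B) * N := by
          rw [ENNReal.mul_rpow_of_nonneg _ _ hp0.le, ENNReal.mul_rpow_of_nonneg _ _ hp0.le,
            ← ENNReal.rpow_mul N, one_div_mul_cancel hpne, ENNReal.rpow_one,
            ← ENNReal.rpow_mul (μ A)]
          ring
  have h6 : (1:ℝ≥0∞) ≤ M ^ p * μ A ^ ((1/q) * p) * ν B :=
    (ENNReal.mul_le_mul_iff_left hN0 hNt).mp hmain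
  have hexp : (1/q) * p * (1/p) = 1/q := by
    rw [mul_assoc, mul_one_div_cancel hpne, mul_one]
  have h7 : (1:ℝ≥0∞) ≤ M * μ A ^ (1/q) * ν B ^ (1/p) := by
    have h := ENNReal.rpow_le_rpow h6 (by positivity : (0:ℝ) ≤ 1/p)
    rw [ENNReal.one_rpow] at h
    calc (1:ℝ≥0∞) ≤ (M ^ p * μ A ^ ((1/q) * p) * ν B) ^ (1/p) := h
      _ = M * μ A ^ (1/q) * ν B ^ (1/p) := by
          rw [ENNReal.mul_rpow_of_nonneg _ _ (by positivity : (0:ℝ) ≤ 1/p),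
            ENNReal.mul_rpow_of_nonneg _ _ (by positivity : (0:ℝ) ≤ 1/p),
            ← ENNReal.rpow_mul M, mul_one_div_cancel hpne, ENNReal.rpow_one,
            ← ENNReal.rpow_mul (μ A), hexp]
  refine ENNReal.div_le_of_le_mul ?_
  calc (1:ℝ≥0∞) ≤ M * μ A ^ (1/q) * ν B ^ (1/p) := h7
    _ = ν B ^ (1/p) * μ A ^ (1/q) * M := by ring
end

section
/- Let (Ω, μ) and (Δ, ν) be measure spaces and let {τ_α}_{α∈Ω} and {ω_β}_{β∈Δ} be Parseval continuous frames for a Hilbert space H over 𝕂 (ℝ or ℂ). Then for every h ∈ H with h ≠ 0, μ(supp(θ_τ h)) · ν(supp(θ_ω h)) ≥ 1 / sup_{α∈Ω, β∈Δ} |⟨ω_β, τ_α⟩|². -/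
open MeasureTheory ENNReal

section FrameAux

variable {𝕂 : Type*} [RCLike 𝕂] {H : Type*} [NormedAddCommGroup H] [InnerProductSpace 𝕂 H]
  [CompleteSpace H] {Δ : Type*} [MeasurableSpace Δ] (ν : Measure Δ) (ω : Δ → H)

lemma frame_integrable
    (hω_meas : ∀ h : H, StronglyMeasurable fun β : Δ => (inner 𝕂 h (ω β) : 𝕂))
    (hω_norm : ∀ h : H, ‖h‖ ^ 2 = ∫ β, ‖(inner 𝕂 h (ω β) : 𝕂)‖ ^ 2 ∂ν) (h : H) :
    Integrable (fun β => ‖(inner 𝕂 h (ω β) : 𝕂)‖ ^ 2) ν := by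
  by_cases h0 : h = 0
  · simpa [h0] using integrable_zero Δ ℝ ν
  · by_contra hint
    have hnz := hω_norm h
    rw [integral_undef hint] at hnz
    exact h0 (norm_eq_zero.mp (pow_eq_zero_iff two_ne_zero |>.mp hnz))

lemma frame_lintegral
    (hω_meas : ∀ h : H, StronglyMeasurable fun β : Δ => (inner 𝕂 h (ω β) : 𝕂))
    (hω_norm : ∀ h : H, ‖h‖ ^ 2 = ∫ β, ‖(inner 𝕂 h (ω β) : 𝕂)‖ ^ 2 ∂ν) (h : H) :
    ∫⁻ β, (‖(inner 𝕂 h (ω β) : 𝕂)‖₊ : ℝ≥0∞) ^ 2 ∂ν = ENNReal.ofReal (‖h‖ ^ 2) := by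
  rw [hω_norm h, ofReal_integral_eq_lintegral_ofReal
      (frame_integrable ν ω hω_meas hω_norm h)
      (Filter.Eventually.of_forall fun β => by positivity)]
  refine lintegral_congr fun β => ?_
  rw [ENNReal.ofReal_pow (norm_nonneg _), ofReal_norm, enorm_eq_nnnorm]

lemma frame_memLp
    (hω_meas : ∀ h : H, StronglyMeasurable fun β : Δ => (inner 𝕂 h (ω β) : 𝕂))
    (hω_norm : ∀ h : H, ‖h‖ ^ 2 = ∫ β, ‖(inner 𝕂 h (ω β) : 𝕂)‖ ^ 2 ∂ν) (h : H) :
    MemLp (fun β => (inner 𝕂 (ω β) h : 𝕂)) 2 ν := by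
  have hsm : StronglyMeasurable fun β => (inner 𝕂 (ω β) h : 𝕂) := by
    have heq : (fun β => (inner 𝕂 (ω β) h : 𝕂)) =
        fun β => (starRingEnd 𝕂) (inner 𝕂 h (ω β) : 𝕂) := by
      funext β; rw [inner_conj_symm]
    rw [heq]
    exact RCLike.continuous_conj.comp_stronglyMeasurable (hω_meas h)
  rw [memLp_two_iff_integrable_sq_norm hsm.aestronglyMeasurable]
  have heq : (fun β => ‖(inner 𝕂 (ω β) h : 𝕂)‖ ^ 2) =
      fun β => ‖(inner 𝕂 h (ω β) : 𝕂)‖ ^ 2 := by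
    funext β; rw [norm_inner_symm]
  rw [heq]
  exact frame_integrable ν ω hω_meas hω_norm h

lemma frame_recon
    (hω_meas : ∀ h : H, StronglyMeasurable fun β : Δ => (inner 𝕂 h (ω β) : 𝕂))
    (hω_norm : ∀ h : H, ‖h‖ ^ 2 = ∫ β, ‖(inner 𝕂 h (ω β) : 𝕂)‖ ^ 2 ∂ν) (u v : H) :
    (inner 𝕂 u v : 𝕂) = ∫ β, (inner 𝕂 u (ω β) : 𝕂) * (inner 𝕂 (ω β) v : 𝕂) ∂ν := by
  have memF : ∀ w : H, MemLp (fun β => (inner 𝕂 (ω β) w : 𝕂)) 2 ν :=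
    frame_memLp ν ω hω_meas hω_norm
  have hsqhalf : ∀ x : ℝ≥0∞, (x ^ (2 : ℕ)) ^ ((1 : ℝ)/2) = x := by
    intro x
    rw [← ENNReal.rpow_natCast x 2, ← ENNReal.rpow_mul]
    norm_num
  have hnorm_map : ∀ w : H, ‖(memF w).toLp _‖ = ‖w‖ := by
    intro w
    rw [Lp.norm_toLp, eLpNorm_eq_lintegral_rpow_enorm_toReal two_ne_zero ENNReal.ofNat_ne_top]
    have h2 : (2 : ℝ≥0∞).toReal = (2 : ℝ) := by simp
    rw [h2]
    have hkey : ∫⁻ β, (‖(inner 𝕂 (ω β) w : 𝕂)‖₊ : ℝ≥0∞) ^ (2 : ℝ) ∂ν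
        = ENNReal.ofReal (‖w‖ ^ 2) := by
      rw [← frame_lintegral ν ω hω_meas hω_norm w]
      refine lintegral_congr fun β => ?_
      have hnn : ‖(inner 𝕂 (ω β) w : 𝕂)‖₊ = ‖(inner 𝕂 w (ω β) : 𝕂)‖₊ :=
        NNReal.coe_injective (by simpa using norm_inner_symm (ω β) w)
      rw [hnn, ← ENNReal.rpow_natCast _ 2]
      norm_num
    simp only [enorm_eq_nnnorm]; rw [hkey, ENNReal.ofReal_pow (norm_nonneg _), hsqhalf,
      ENNReal.toReal_ofReal (norm_nonneg _)]
  let θ : H →ₗᵢ[𝕂] Lp 𝕂 2 ν :=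
    { toFun := fun w => (memF w).toLp _
      map_add' := fun w₁ w₂ =>
        (MemLp.toLp_congr (memF (w₁ + w₂)) ((memF w₁).add (memF w₂))
          (Filter.Eventually.of_forall fun β => by simp [inner_add_right])).trans
          (MemLp.toLp_add (memF w₁) (memF w₂))
      map_smul' := fun c w =>
        (MemLp.toLp_congr (memF (c • w)) ((memF w).const_smul c)
          (Filter.Eventually.of_forall fun β => by simp [inner_smul_right])).trans
          (MemLp.toLp_const_smul c (memF w))
      norm_map' := hnorm_map }
  have key := θ.inner_map_map u v
  rw [← key, L2.inner_def]
  refine integral_congr_ae ?_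
  filter_upwards [MemLp.coeFn_toLp (memF u), MemLp.coeFn_toLp (memF v)] with β h1 h2
  have hθu : (θ u : Δ → 𝕂) β = (inner 𝕂 (ω β) u : 𝕂) := h1
  have hθv : (θ v : Δ → 𝕂) β = (inner 𝕂 (ω β) v : 𝕂) := h2
  rw [RCLike.inner_apply, hθu, hθv, inner_conj_symm, mul_comm]

end FrameAux

/-- Continuous uncertainty principle for Parseval continuous frames in a Hilbert space:
`μ(supp θ_τ h) * ν(supp θ_ω h) ≥ 1 / sup_{α,β} |⟪ω_β, τ_α⟫|²` for every nonzero `h`. -/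
theorem parseval_continuous_frame_uncertainty_first
    {𝕂 : Type*} [RCLike 𝕂]
    {H : Type*} [NormedAddCommGroup H] [InnerProductSpace 𝕂 H] [CompleteSpace H]
    {Ω Δ : Type*} [MeasurableSpace Ω] [MeasurableSpace Δ]
    (μ : Measure Ω) (ν : Measure Δ)
    (τ : Ω → H) (ω : Δ → H)
    -- `τ` is a Parseval continuous frame for `H` :
    (hτ_meas : ∀ h : H, StronglyMeasurable fun α : Ω => (inner 𝕂 h (τ α) : 𝕂))
    (hτ_norm : ∀ h : H, ‖h‖ ^ 2 = ∫ α, ‖(inner 𝕂 h (τ α) : 𝕂)‖ ^ 2 ∂μ)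
    -- `ω` is a Parseval continuous frame for `H` :
    (hω_meas : ∀ h : H, StronglyMeasurable fun β : Δ => (inner 𝕂 h (ω β) : 𝕂))
    (hω_norm : ∀ h : H, ‖h‖ ^ 2 = ∫ β, ‖(inner 𝕂 h (ω β) : 𝕂)‖ ^ 2 ∂ν)
    (h : H) (hh : h ≠ 0) :
    1 / (⨆ (α : Ω) (β : Δ), (‖(inner 𝕂 (ω β) (τ α) : 𝕂)‖₊ : ℝ≥0∞) ^ 2) ≤
      μ {α : Ω | (inner 𝕂 h (τ α) : 𝕂) ≠ 0} * ν {β : Δ | (inner 𝕂 h (ω β) : 𝕂) ≠ 0} := by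
  classical
  set Sτ : Set Ω := {α | (inner 𝕂 h (τ α) : 𝕂) ≠ 0} with hSτdef
  set Sω : Set Δ := {β | (inner 𝕂 h (ω β) : 𝕂) ≠ 0} with hSωdef
  set M : ℝ≥0∞ := ⨆ (α : Ω) (β : Δ), (‖(inner 𝕂 (ω β) (τ α) : 𝕂)‖₊ : ℝ≥0∞) ^ 2 with hMdef
  have hSωm : MeasurableSet Sω := (hω_meas h).measurableSet_support
  have hSτm : MeasurableSet Sτ := (hτ_meas h).measurableSet_support
  set X : ℝ≥0∞ := ENNReal.ofReal (‖h‖ ^ 2) with hXdef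
  have hX0 : X ≠ 0 := by
    have : (0 : ℝ) < ‖h‖ ^ 2 := pow_pos (norm_pos_iff.mpr hh) 2
    simp [hXdef, ENNReal.ofReal_eq_zero, not_le, this, hh]
  have hXtop : X ≠ ∞ := ENNReal.ofReal_ne_top
  have hsqhalf : ∀ x : ℝ≥0∞, (x ^ ((1 : ℝ)/2)) ^ (2 : ℕ) = x := by
    intro x
    rw [← ENNReal.rpow_natCast _ 2, ← ENNReal.rpow_mul]
    norm_num
  -- bound each cross inner product by `M ^ (1/2)`
  have hMb : ∀ (α : Ω) (β : Δ), (‖(inner 𝕂 (ω β) (τ α) : 𝕂)‖₊ : ℝ≥0∞) ≤ M ^ ((1 : ℝ)/2) := by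
    intro α β
    have h1 : (‖(inner 𝕂 (ω β) (τ α) : 𝕂)‖₊ : ℝ≥0∞) ^ 2 ≤ M :=
      le_iSup₂ (f := fun (α : Ω) (β : Δ) => (‖(inner 𝕂 (ω β) (τ α) : 𝕂)‖₊ : ℝ≥0∞) ^ 2) α β
    calc (‖(inner 𝕂 (ω β) (τ α) : 𝕂)‖₊ : ℝ≥0∞)
        = ((‖(inner 𝕂 (ω β) (τ α) : 𝕂)‖₊ : ℝ≥0∞) ^ (2 : ℕ)) ^ ((1 : ℝ)/2) := by
          rw [← ENNReal.rpow_natCast _ 2, ← ENNReal.rpow_mul]; norm_num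
      _ ≤ M ^ ((1 : ℝ)/2) := ENNReal.rpow_le_rpow h1 (by norm_num)
  -- Cauchy–Schwarz on `Sω`
  have hCS : (∫⁻ β in Sω, (‖(inner 𝕂 h (ω β) : 𝕂)‖₊ : ℝ≥0∞) ∂ν) ^ (2 : ℕ) ≤ X * ν Sω := by
    have hconj : Real.HolderConjugate 2 2 := Real.HolderConjugate.two_two
    have hfm : AEMeasurable (fun β => (‖(inner 𝕂 h (ω β) : 𝕂)‖₊ : ℝ≥0∞)) (ν.restrict Sω) :=
      ((hω_meas h).enorm).aemeasurable
    have key := ENNReal.lintegral_mul_le_Lp_mul_Lq (ν.restrict Sω) hconj hfm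
      (aemeasurable_const (b := (1 : ℝ≥0∞)))
    simp only [Pi.mul_apply, mul_one, ENNReal.one_rpow, lintegral_one,
      Measure.restrict_apply_univ] at key
    have hA : ∫⁻ β in Sω, (‖(inner 𝕂 h (ω β) : 𝕂)‖₊ : ℝ≥0∞) ^ (2 : ℝ) ∂ν ≤ X := by
      calc ∫⁻ β in Sω, (‖(inner 𝕂 h (ω β) : 𝕂)‖₊ : ℝ≥0∞) ^ (2 : ℝ) ∂ν
          ≤ ∫⁻ β, (‖(inner 𝕂 h (ω β) : 𝕂)‖₊ : ℝ≥0∞) ^ (2 : ℝ) ∂ν :=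
            setLIntegral_le_lintegral _ _
        _ = ∫⁻ β, (‖(inner 𝕂 h (ω β) : 𝕂)‖₊ : ℝ≥0∞) ^ (2 : ℕ) ∂ν := by
            refine lintegral_congr fun β => ?_
            rw [← ENNReal.rpow_natCast _ 2]; norm_num
        _ = X := frame_lintegral ν ω hω_meas hω_norm h
    calc (∫⁻ β in Sω, (‖(inner 𝕂 h (ω β) : 𝕂)‖₊ : ℝ≥0∞) ∂ν) ^ (2 : ℕ)
        ≤ ((∫⁻ β in Sω, (‖(inner 𝕂 h (ω β) : 𝕂)‖₊ : ℝ≥0∞) ^ (2 : ℝ) ∂ν) ^ ((1:ℝ)/2)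
            * (ν Sω) ^ ((1:ℝ)/2)) ^ (2 : ℕ) := pow_le_pow_left' key 2
      _ = (∫⁻ β in Sω, (‖(inner 𝕂 h (ω β) : 𝕂)‖₊ : ℝ≥0∞) ^ (2 : ℝ) ∂ν) * ν Sω := by
          rw [mul_pow, hsqhalf, hsqhalf]
      _ ≤ X * ν Sω := mul_le_mul_left hA _
  -- indicator identity for the ω-frame coefficients
  have hindω : (fun β => (‖(inner 𝕂 h (ω β) : 𝕂)‖₊ : ℝ≥0∞))
      = Sω.indicator (fun β => (‖(inner 𝕂 h (ω β) : 𝕂)‖₊ : ℝ≥0∞)) := by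
    funext β
    by_cases hb : β ∈ Sω
    · rw [Set.indicator_of_mem hb]
    · have hz : (inner 𝕂 h (ω β) : 𝕂) = 0 := not_not.mp hb
      rw [Set.indicator_of_notMem hb, hz]; simp
  -- pointwise bound on τ-frame coefficients via the reconstruction formula
  have hpt : ∀ α : Ω, (‖(inner 𝕂 h (τ α) : 𝕂)‖₊ : ℝ≥0∞)
      ≤ M ^ ((1 : ℝ)/2) * ∫⁻ β in Sω, (‖(inner 𝕂 h (ω β) : 𝕂)‖₊ : ℝ≥0∞) ∂ν := by
    intro α
    have hrecon := frame_recon ν ω hω_meas hω_norm h (τ α)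
    calc (‖(inner 𝕂 h (τ α) : 𝕂)‖₊ : ℝ≥0∞)
        = ‖∫ β, (inner 𝕂 h (ω β) : 𝕂) * (inner 𝕂 (ω β) (τ α) : 𝕂) ∂ν‖₊ := by rw [← hrecon]
      _ ≤ ∫⁻ β, ‖(inner 𝕂 h (ω β) : 𝕂) * (inner 𝕂 (ω β) (τ α) : 𝕂)‖₊ ∂ν :=
          enorm_integral_le_lintegral_enorm _
      _ = ∫⁻ β, (‖(inner 𝕂 h (ω β) : 𝕂)‖₊ : ℝ≥0∞) * (‖(inner 𝕂 (ω β) (τ α) : 𝕂)‖₊ : ℝ≥0∞) ∂ν := by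
          simp [nnnorm_mul]
      _ ≤ ∫⁻ β, (‖(inner 𝕂 h (ω β) : 𝕂)‖₊ : ℝ≥0∞) * M ^ ((1 : ℝ)/2) ∂ν :=
          lintegral_mono fun β => mul_le_mul_right (hMb α β) _
      _ = M ^ ((1 : ℝ)/2) * ∫⁻ β, (‖(inner 𝕂 h (ω β) : 𝕂)‖₊ : ℝ≥0∞) ∂ν := by
          simp_rw [mul_comm ((‖(inner 𝕂 h (ω _) : 𝕂)‖₊ : ℝ≥0∞)) (M ^ ((1 : ℝ)/2))]
          exact lintegral_const_mul _ (hω_meas h).enorm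
      _ = M ^ ((1 : ℝ)/2) * ∫⁻ β in Sω, (‖(inner 𝕂 h (ω β) : 𝕂)‖₊ : ℝ≥0∞) ∂ν := by
          conv_lhs => rw [hindω]
          rw [lintegral_indicator hSωm]
  -- squared pointwise bound
  have hsq : ∀ α : Ω, (‖(inner 𝕂 h (τ α) : 𝕂)‖₊ : ℝ≥0∞) ^ (2 : ℕ) ≤ M * (X * ν Sω) := by
    intro α
    calc (‖(inner 𝕂 h (τ α) : 𝕂)‖₊ : ℝ≥0∞) ^ (2 : ℕ)
        ≤ (M ^ ((1 : ℝ)/2) * ∫⁻ β in Sω, (‖(inner 𝕂 h (ω β) : 𝕂)‖₊ : ℝ≥0∞) ∂ν) ^ (2 : ℕ) :=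
          pow_le_pow_left' (hpt α) 2
      _ = M * (∫⁻ β in Sω, (‖(inner 𝕂 h (ω β) : 𝕂)‖₊ : ℝ≥0∞) ∂ν) ^ (2 : ℕ) := by
          rw [mul_pow, hsqhalf]
      _ ≤ M * (X * ν Sω) := mul_le_mul_right hCS M
  -- integrate over Sτ
  have hindτ : (fun α => (‖(inner 𝕂 h (τ α) : 𝕂)‖₊ : ℝ≥0∞) ^ (2 : ℕ))
      = Sτ.indicator (fun α => (‖(inner 𝕂 h (τ α) : 𝕂)‖₊ : ℝ≥0∞) ^ (2 : ℕ)) := by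
    funext α
    by_cases ha : α ∈ Sτ
    · rw [Set.indicator_of_mem ha]
    · have hz : (inner 𝕂 h (τ α) : 𝕂) = 0 := not_not.mp ha
      rw [Set.indicator_of_notMem ha, hz]; simp
  have hXle : X ≤ μ Sτ * (M * (X * ν Sω)) := by
    calc X = ∫⁻ α, (‖(inner 𝕂 h (τ α) : 𝕂)‖₊ : ℝ≥0∞) ^ (2 : ℕ) ∂μ :=
        (frame_lintegral μ τ hτ_meas hτ_norm h).symm
      _ = ∫⁻ α in Sτ, (‖(inner 𝕂 h (τ α) : 𝕂)‖₊ : ℝ≥0∞) ^ (2 : ℕ) ∂μ := by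
          conv_lhs => rw [hindτ]
          rw [lintegral_indicator hSτm]
      _ ≤ ∫⁻ _ in Sτ, M * (X * ν Sω) ∂μ := lintegral_mono fun α => hsq α
      _ = M * (X * ν Sω) * μ Sτ := setLIntegral_const _ _
      _ = μ Sτ * (M * (X * ν Sω)) := mul_comm _ _
  have hone : 1 ≤ μ Sτ * M * ν Sω := by
    have h2 : 1 * X ≤ (μ Sτ * M * ν Sω) * X := by
      calc 1 * X = X := one_mul X
        _ ≤ μ Sτ * (M * (X * ν Sω)) := hXle
        _ = (μ Sτ * M * ν Sω) * X := by ring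
    exact (ENNReal.mul_le_mul_iff_left hX0 hXtop).mp h2
  by_cases hMtop : M = ∞
  · rw [hMtop]
    simp
  · have hM0 : M ≠ 0 := by
      intro hM0
      rw [hM0] at hone
      simp at hone
    rw [ENNReal.div_le_iff hM0 hMtop]
    calc (1 : ℝ≥0∞) ≤ μ Sτ * M * ν Sω := hone
      _ = μ Sτ * ν Sω * M := by ring
end

section
/- Let (Ω, μ) and (Δ, ν) be measure spaces and let {τ_α}_{α∈Ω} and {ω_β}_{β∈Δ} be Parseval continuous frames for a Hilbert space H over 𝕂 (ℝ or ℂ). Then for every h ∈ H with h ≠ 0, ν(supp(θ_ω h)) · μ(supp(θ_τ h)) ≥ 1 / sup_{α∈Ω, β∈Δ} |⟨τ_α, ω_β⟩|². -/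
open MeasureTheory ENNReal

section Aux

variable {𝕂 : Type*} [RCLike 𝕂]
variable {H : Type*} [NormedAddCommGroup H] [InnerProductSpace 𝕂 H]
variable {Ω : Type*} [MeasurableSpace Ω] {μ : Measure Ω} {τ : Ω → H}

private lemma frame_integrable_s3
    (hτ_norm : ∀ h : H, ‖h‖ ^ 2 = ∫ α, ‖(inner 𝕂 h (τ α) : 𝕂)‖ ^ 2 ∂μ)
    (g : H) : Integrable (fun α => ‖(inner 𝕂 g (τ α) : 𝕂)‖ ^ 2) μ := by
  by_contra hi
  have h0 : ‖g‖ ^ 2 = 0 := by rw [hτ_norm g, integral_undef hi]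
  have hg : g = 0 := norm_eq_zero.mp (pow_eq_zero_iff two_ne_zero |>.mp h0)
  apply hi
  have hfun : (fun α => ‖(inner 𝕂 g (τ α) : 𝕂)‖ ^ 2) = fun _ => (0 : ℝ) := by
    funext α; simp [hg]
  rw [hfun]
  exact integrable_zero _ _ _

private lemma frame_memLp_s3
    (hτ_meas : ∀ h : H, StronglyMeasurable fun α : Ω => (inner 𝕂 h (τ α) : 𝕂))
    (hτ_norm : ∀ h : H, ‖h‖ ^ 2 = ∫ α, ‖(inner 𝕂 h (τ α) : 𝕂)‖ ^ 2 ∂μ)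
    (g : H) : MemLp (fun α => (starRingEnd 𝕂) (inner 𝕂 g (τ α) : 𝕂)) 2 μ := by
  refine (memLp_two_iff_integrable_sq_norm
    (RCLike.continuous_conj.comp_stronglyMeasurable (hτ_meas g)).aestronglyMeasurable).mpr ?_
  have : (fun α => ‖(starRingEnd 𝕂) (inner 𝕂 g (τ α) : 𝕂)‖ ^ 2)
      = fun α => ‖(inner 𝕂 g (τ α) : 𝕂)‖ ^ 2 := by
    funext α; rw [RCLike.norm_conj]
  rw [this]
  exact frame_integrable_s3 hτ_norm g

private lemma frame_lintegral_s3
    (hτ_norm : ∀ h : H, ‖h‖ ^ 2 = ∫ α, ‖(inner 𝕂 h (τ α) : 𝕂)‖ ^ 2 ∂μ)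
    (g : H) :
    ∫⁻ α, (‖(inner 𝕂 g (τ α) : 𝕂)‖₊ : ℝ≥0∞) ^ 2 ∂μ = (‖g‖₊ : ℝ≥0∞) ^ 2 := by
  have hi := frame_integrable_s3 hτ_norm g
  have key := MeasureTheory.ofReal_integral_eq_lintegral_ofReal hi
    (Filter.Eventually.of_forall fun α => sq_nonneg _)
  rw [← hτ_norm g] at key
  calc ∫⁻ α, (‖(inner 𝕂 g (τ α) : 𝕂)‖₊ : ℝ≥0∞) ^ 2 ∂μ
      = ∫⁻ α, ENNReal.ofReal (‖(inner 𝕂 g (τ α) : 𝕂)‖ ^ 2) ∂μ := by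
        apply lintegral_congr; intro α
        rw [ENNReal.ofReal_pow (norm_nonneg _), ← coe_nnnorm, ENNReal.ofReal_coe_nnreal]
    _ = ENNReal.ofReal (‖g‖ ^ 2) := key.symm
    _ = (‖g‖₊ : ℝ≥0∞) ^ 2 := by
        rw [ENNReal.ofReal_pow (norm_nonneg _), ← coe_nnnorm, ENNReal.ofReal_coe_nnreal]

private lemma frame_inner_repr
    (hτ_meas : ∀ h : H, StronglyMeasurable fun α : Ω => (inner 𝕂 h (τ α) : 𝕂))
    (hτ_norm : ∀ h : H, ‖h‖ ^ 2 = ∫ α, ‖(inner 𝕂 h (τ α) : 𝕂)‖ ^ 2 ∂μ)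
    (g h : H) :
    (inner 𝕂 g h : 𝕂) =
      ∫ α, (inner 𝕂 g (τ α) : 𝕂) * (starRingEnd 𝕂) (inner 𝕂 h (τ α) : 𝕂) ∂μ := by
  have mem : ∀ x : H, MemLp (fun α => (starRingEnd 𝕂) (inner 𝕂 x (τ α) : 𝕂)) 2 μ :=
    frame_memLp_s3 hτ_meas hτ_norm
  let T : H →ₗᵢ[𝕂] Lp 𝕂 2 μ :=
    { toFun := fun x => (mem x).toLp _
      map_add' := fun x y => by
        rw [← MemLp.toLp_add (mem x) (mem y), MemLp.toLp_eq_toLp_iff]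
        filter_upwards with α
        simp [inner_add_left]
      map_smul' := fun c x => by
        rw [RingHom.id_apply, ← MemLp.toLp_const_smul c (mem x), MemLp.toLp_eq_toLp_iff]
        filter_upwards with α
        simp [inner_smul_left, mul_comm]
      norm_map' := fun x => by
        have hcoe : ((mem x).toLp _ : Lp 𝕂 2 μ) =ᵐ[μ]
            fun α => (starRingEnd 𝕂) (inner 𝕂 x (τ α) : 𝕂) :=
          MemLp.coeFn_toLp _
        have h1 : RCLike.re (inner 𝕂 ((mem x).toLp _) ((mem x).toLp _) : 𝕂) = ‖x‖ ^ 2 := by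
          rw [L2.inner_def]
          have heq : ∫ α, (inner 𝕂 (((mem x).toLp _ : Lp 𝕂 2 μ) α)
                (((mem x).toLp _ : Lp 𝕂 2 μ) α) : 𝕂) ∂μ
              = ∫ α, ((‖(inner 𝕂 x (τ α) : 𝕂)‖ ^ 2 : ℝ) : 𝕂) ∂μ := by
            apply integral_congr_ae
            filter_upwards [hcoe] with α hα
            rw [hα, RCLike.inner_apply, RCLike.mul_conj, RCLike.norm_conj]
            norm_cast
          rw [heq, integral_ofReal, RCLike.ofReal_re, ← hτ_norm x]
        have h2 : ‖((mem x).toLp _ : Lp 𝕂 2 μ)‖ ^ 2 = ‖x‖ ^ 2 := by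
          rw [← h1, inner_self_eq_norm_sq]
        have h3 := congrArg Real.sqrt h2
        rwa [Real.sqrt_sq (norm_nonneg _), Real.sqrt_sq (norm_nonneg _)] at h3 }
  have hT := T.inner_map_map g h
  rw [← hT, L2.inner_def]
  apply integral_congr_ae
  filter_upwards [MemLp.coeFn_toLp (mem g), MemLp.coeFn_toLp (mem h)] with α h1 h2
  have e1 : (T g : Ω → 𝕂) α = (starRingEnd 𝕂) (inner 𝕂 g (τ α) : 𝕂) := h1
  have e2 : (T h : Ω → 𝕂) α = (starRingEnd 𝕂) (inner 𝕂 h (τ α) : 𝕂) := h2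
  rw [RCLike.inner_apply, e1, e2, RCLike.conj_conj, mul_comm]

end Aux

/-- Continuous uncertainty principle for Parseval continuous frames in a Hilbert space:
`ν(supp θ_ω h) * μ(supp θ_τ h) ≥ 1 / sup_{α,β} |⟪τ_α, ω_β⟫|²` for every nonzero `h`. -/
theorem parseval_continuous_frame_uncertainty_second
    {𝕂 : Type*} [RCLike 𝕂]
    {H : Type*} [NormedAddCommGroup H] [InnerProductSpace 𝕂 H] [CompleteSpace H]
    {Ω Δ : Type*} [MeasurableSpace Ω] [MeasurableSpace Δ]
    (μ : Measure Ω) (ν : Measure Δ)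
    (τ : Ω → H) (ω : Δ → H)
    -- `τ` is a Parseval continuous frame for `H` :
    (hτ_meas : ∀ h : H, StronglyMeasurable fun α : Ω => (inner 𝕂 h (τ α) : 𝕂))
    (hτ_norm : ∀ h : H, ‖h‖ ^ 2 = ∫ α, ‖(inner 𝕂 h (τ α) : 𝕂)‖ ^ 2 ∂μ)
    -- `ω` is a Parseval continuous frame for `H` :
    (hω_meas : ∀ h : H, StronglyMeasurable fun β : Δ => (inner 𝕂 h (ω β) : 𝕂))
    (hω_norm : ∀ h : H, ‖h‖ ^ 2 = ∫ β, ‖(inner 𝕂 h (ω β) : 𝕂)‖ ^ 2 ∂ν)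
    (h : H) (hh : h ≠ 0) :
    1 / (⨆ (α : Ω) (β : Δ), (‖(inner 𝕂 (τ α) (ω β) : 𝕂)‖₊ : ℝ≥0∞) ^ 2) ≤
      ν {β : Δ | (inner 𝕂 h (ω β) : 𝕂) ≠ 0} * μ {α : Ω | (inner 𝕂 h (τ α) : 𝕂) ≠ 0} := by
  classical
  set M : ℝ≥0∞ := ⨆ (α : Ω) (β : Δ), (‖(inner 𝕂 (τ α) (ω β) : 𝕂)‖₊ : ℝ≥0∞) ^ 2 with hM
  by_cases hMtop : M = ∞
  · rw [hMtop]; simp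
  set Sτ : Set Ω := {α : Ω | (inner 𝕂 h (τ α) : 𝕂) ≠ 0} with hSτ
  set Sω : Set Δ := {β : Δ | (inner 𝕂 h (ω β) : 𝕂) ≠ 0} with hSω
  have hSτm : MeasurableSet Sτ := (hτ_meas h).measurableSet_support
  have hSωm : MeasurableSet Sω := (hω_meas h).measurableSet_support
  -- the pointwise key bound
  have key : ∀ β : Δ, (‖(inner 𝕂 h (ω β) : 𝕂)‖₊ : ℝ≥0∞) ^ 2 ≤
      (‖h‖₊ : ℝ≥0∞) ^ 2 * (M * μ Sτ) := by
    intro β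
    set F : Ω → ℝ≥0∞ := fun α => (‖(inner 𝕂 h (τ α) : 𝕂)‖₊ : ℝ≥0∞) with hF
    set G : Ω → ℝ≥0∞ := fun α => (‖(inner 𝕂 (ω β) (τ α) : 𝕂)‖₊ : ℝ≥0∞) with hG
    have hFmeas : Measurable F := (hτ_meas h).measurable.enorm
    have hGmeas : Measurable G := (hτ_meas (ω β)).measurable.enorm
    have step1 : (‖(inner 𝕂 h (ω β) : 𝕂)‖₊ : ℝ≥0∞) ≤ ∫⁻ α, F α * G α ∂μ := by
      rw [frame_inner_repr hτ_meas hτ_norm h (ω β)]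
      refine le_trans (enorm_integral_le_lintegral_enorm _) (le_of_eq ?_)
      apply lintegral_congr; intro α
      rw [hF, hG]
      push_cast [nnnorm_mul, RCLike.nnnorm_conj]
      rw [enorm_eq_nnnorm, nnnorm_mul, RCLike.nnnorm_conj, ENNReal.coe_mul]
    have step2 : ∫⁻ α, F α * G α ∂μ = ∫⁻ α in Sτ, F α * G α ∂μ := by
      rw [← lintegral_indicator hSτm _]
      apply lintegral_congr; intro α
      by_cases hα : α ∈ Sτ
      · rw [Set.indicator_of_mem hα]
      · rw [Set.indicator_of_notMem hα]
        have hα0 : (inner 𝕂 h (τ α) : 𝕂) = 0 := by simpa [hSτ] using hα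
        simp [hF, hα0]
    have CS := ENNReal.lintegral_mul_le_Lp_mul_Lq (μ.restrict Sτ)
      (Real.holderConjugate_iff.mpr ⟨one_lt_two, by norm_num⟩ : Real.HolderConjugate 2 2)
      hFmeas.aemeasurable hGmeas.aemeasurable
    simp_rw [Pi.mul_apply, ENNReal.rpow_two] at CS
    have bF : ∫⁻ α in Sτ, F α ^ 2 ∂μ ≤ (‖h‖₊ : ℝ≥0∞) ^ 2 := by
      refine le_trans (setLIntegral_le_lintegral _ _) ?_
      rw [hF]
      exact le_of_eq (frame_lintegral_s3 hτ_norm h)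
    have bG : ∫⁻ α in Sτ, G α ^ 2 ∂μ ≤ M * μ Sτ := by
      have hb : ∀ α : Ω, G α ^ 2 ≤ M := by
        intro α
        have he : G α = (‖(inner 𝕂 (τ α) (ω β) : 𝕂)‖₊ : ℝ≥0∞) := by
          rw [hG, ← inner_conj_symm, RCLike.nnnorm_conj]
        rw [he, hM]
        exact le_iSup₂ (f := fun (α : Ω) (β : Δ) =>
          (‖(inner 𝕂 (τ α) (ω β) : 𝕂)‖₊ : ℝ≥0∞) ^ 2) α β
      calc ∫⁻ α in Sτ, G α ^ 2 ∂μ ≤ ∫⁻ _ in Sτ, M ∂μ := lintegral_mono fun α => hb α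
        _ = M * μ Sτ := setLIntegral_const _ _
    have hx : (‖(inner 𝕂 h (ω β) : 𝕂)‖₊ : ℝ≥0∞) ≤
        (∫⁻ α in Sτ, F α ^ 2 ∂μ) ^ (1 / (2:ℝ)) * (∫⁻ α in Sτ, G α ^ 2 ∂μ) ^ (1 / (2:ℝ)) :=
      step1.trans (le_of_eq step2 |>.trans CS)
    have hsq : (‖(inner 𝕂 h (ω β) : 𝕂)‖₊ : ℝ≥0∞) ^ 2 ≤
        (∫⁻ α in Sτ, F α ^ 2 ∂μ) * (∫⁻ α in Sτ, G α ^ 2 ∂μ) := by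
      calc (‖(inner 𝕂 h (ω β) : 𝕂)‖₊ : ℝ≥0∞) ^ 2
          ≤ ((∫⁻ α in Sτ, F α ^ 2 ∂μ) ^ (1 / (2:ℝ)) *
              (∫⁻ α in Sτ, G α ^ 2 ∂μ) ^ (1 / (2:ℝ))) ^ 2 := pow_le_pow_left' hx 2
        _ = (∫⁻ α in Sτ, F α ^ 2 ∂μ) * (∫⁻ α in Sτ, G α ^ 2 ∂μ) := by
            rw [mul_pow, ← ENNReal.rpow_two, ← ENNReal.rpow_two, ← ENNReal.rpow_mul,
              ← ENNReal.rpow_mul]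
            norm_num
    exact hsq.trans (mul_le_mul' bF bG)
  -- sum the key bound over `Sω`
  have hωlin := frame_lintegral_s3 hω_norm h
  have main : (‖h‖₊ : ℝ≥0∞) ^ 2 ≤ ((‖h‖₊ : ℝ≥0∞) ^ 2 * (M * μ Sτ)) * ν Sω := by
    have hind : ∫⁻ β, (‖(inner 𝕂 h (ω β) : 𝕂)‖₊ : ℝ≥0∞) ^ 2 ∂ν
        = ∫⁻ β in Sω, (‖(inner 𝕂 h (ω β) : 𝕂)‖₊ : ℝ≥0∞) ^ 2 ∂ν := by
      rw [← lintegral_indicator hSωm _]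
      apply lintegral_congr; intro β
      by_cases hβ : β ∈ Sω
      · rw [Set.indicator_of_mem hβ]
      · rw [Set.indicator_of_notMem hβ]
        have hβ0 : (inner 𝕂 h (ω β) : 𝕂) = 0 := by simpa [hSω] using hβ
        simp [hβ0]
    calc (‖h‖₊ : ℝ≥0∞) ^ 2
        = ∫⁻ β in Sω, (‖(inner 𝕂 h (ω β) : 𝕂)‖₊ : ℝ≥0∞) ^ 2 ∂ν := by rw [← hind, hωlin]
      _
        ≤ ∫⁻ _ in Sω, (‖h‖₊ : ℝ≥0∞) ^ 2 * (M * μ Sτ) ∂ν := lintegral_mono fun β => key β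
      _ = ((‖h‖₊ : ℝ≥0∞) ^ 2 * (M * μ Sτ)) * ν Sω := setLIntegral_const _ _
  have hh2 : (‖h‖₊ : ℝ≥0∞) ^ 2 ≠ 0 := by simp [hh]
  have hh2' : (‖h‖₊ : ℝ≥0∞) ^ 2 ≠ ∞ := by
    exact ENNReal.pow_ne_top ENNReal.coe_ne_top
  have one_le : 1 ≤ (M * μ Sτ) * ν Sω := by
    have hm : (‖h‖₊ : ℝ≥0∞) ^ 2 * 1 ≤ (‖h‖₊ : ℝ≥0∞) ^ 2 * ((M * μ Sτ) * ν Sω) := by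
      rw [mul_one, ← mul_assoc]
      exact main
    exact (ENNReal.mul_le_mul_iff_right hh2 hh2').mp hm
  have hM0 : M ≠ 0 := by
    intro h0
    rw [h0, zero_mul, zero_mul] at one_le
    exact absurd one_le (by simp)
  rw [ENNReal.div_le_iff_le_mul (Or.inl hM0) (Or.inl hMtop)]
  calc (1:ℝ≥0∞) ≤ (M * μ Sτ) * ν Sω := one_le
    _ = ν Sω * μ Sτ * M := by ring
end

section
/- Let X be a finite-dimensional Banach space over 𝕂 (ℝ or ℂ), let 1 < p < ∞ with conjugate index q (1/p + 1/q = 1), and let ({f_j}_{j=1}^n, {τ_j}_{j=1}^n) and ({g_k}_{k=1}^m, {ω_k}_{k=1}^m) be p-Schauder frames for X. Then for every x ∈ X with x ≠ 0, ‖θ_f x‖₀^{1/p} · ‖θ_g x‖₀^{1/q} ≥ 1 / max_{1≤j≤n, 1≤k≤m} |f_j(ω_k)|. -/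
/-- **Functional Donoho-Stark-Elad-Bruckstein-Ricaud-Torrésani Uncertainty Principle**
(first inequality). If `(f, τ)` and `(g, ω)` are p-Schauder frames for a
finite-dimensional Banach space `X`, then for every nonzero `x`,
`‖θ_f x‖₀^(1/p) * ‖θ_g x‖₀^(1/q) ≥ 1 / max_{j,k} |f_j(ω_k)|`. -/
theorem functional_donoho_stark_first
    {𝕂 : Type*} [RCLike 𝕂]
    {X : Type*} [NormedAddCommGroup X] [NormedSpace 𝕂 X] [FiniteDimensional 𝕂 X]
    {n m : ℕ} (p q : ℝ) (hp : 1 < p) (hpq : 1 / p + 1 / q = 1)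
    (f : Fin n → X →L[𝕂] 𝕂) (τ : Fin n → X)
    (g : Fin m → X →L[𝕂] 𝕂) (ω : Fin m → X)
    -- `(f, τ)` is a p-Schauder frame for `X` :
    (hf_norm : ∀ x : X, ‖x‖ ^ p = ∑ j, ‖f j x‖ ^ p)
    (hf_rec : ∀ x : X, x = ∑ j, f j x • τ j)
    -- `(g, ω)` is a p-Schauder frame for `X` :
    (hg_norm : ∀ x : X, ‖x‖ ^ p = ∑ k, ‖g k x‖ ^ p)
    (hg_rec : ∀ x : X, x = ∑ k, g k x • ω k)
    (x : X) (hx : x ≠ 0) :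
    1 / (⨆ (j : Fin n) (k : Fin m), ‖f j (ω k)‖) ≤
      (Nat.card {j : Fin n // f j x ≠ 0} : ℝ) ^ (1 / p) *
        (Nat.card {k : Fin m // g k x ≠ 0} : ℝ) ^ (1 / q) := by
  classical
  have hp0 : (0:ℝ) < p := lt_trans one_pos hp
  have hq : Real.HolderConjugate p q := Real.holderConjugate_iff.2 ⟨hp, by rw [← one_div, ← one_div]; exact hpq⟩
  have hx' : 0 < ‖x‖ := norm_pos_iff.2 hx
  have hxp : 0 < ‖x‖ ^ p := Real.rpow_pos_of_pos hx' p
  set M := ⨆ (j : Fin n) (k : Fin m), ‖f j (ω k)‖ with hMdef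
  -- nonemptiness
  have hn : Nonempty (Fin n) := by
    rcases isEmpty_or_nonempty (Fin n) with h | h
    · exfalso
      have := hf_norm x
      rw [Finset.univ_eq_empty, Finset.sum_empty] at this
      exact hxp.ne' this
    · exact h
  have hm : Nonempty (Fin m) := by
    rcases isEmpty_or_nonempty (Fin m) with h | h
    · exfalso
      have := hg_norm x
      rw [Finset.univ_eq_empty, Finset.sum_empty] at this
      exact hxp.ne' this
    · exact h
  obtain ⟨j0⟩ := hn
  obtain ⟨k0⟩ := hm
  -- the sup bounds
  have hbdd1 : ∀ j : Fin n, BddAbove (Set.range fun k : Fin m => ‖f j (ω k)‖) :=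
    fun j => (Set.finite_range _).bddAbove
  have hbdd2 : BddAbove (Set.range fun j : Fin n => ⨆ k : Fin m, ‖f j (ω k)‖) :=
    (Set.finite_range _).bddAbove
  have hMle : ∀ j k, ‖f j (ω k)‖ ≤ M :=
    fun j k => (le_ciSup (hbdd1 j) k).trans (le_ciSup hbdd2 j)
  have hM0 : 0 ≤ M := (norm_nonneg (f j0 (ω k0))).trans (hMle j0 k0)
  -- support sets
  set A : Finset (Fin n) := Finset.univ.filter (fun j => f j x ≠ 0) with hA
  set B : Finset (Fin m) := Finset.univ.filter (fun k => g k x ≠ 0) with hB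
  have hcardA : (Nat.card {j : Fin n // f j x ≠ 0} : ℝ) = (A.card : ℝ) := by
    rw [Nat.card_eq_fintype_card, Fintype.card_subtype]
  have hcardB : (Nat.card {k : Fin m // g k x ≠ 0} : ℝ) = (B.card : ℝ) := by
    rw [Nat.card_eq_fintype_card, Fintype.card_subtype]
  -- expansion of f j x
  have hfx : ∀ j, f j x = ∑ k ∈ B, g k x * f j (ω k) := by
    intro j
    conv_lhs => rw [hg_rec x]
    rw [map_sum]
    simp only [map_smul, smul_eq_mul]
    exact (Finset.sum_filter_of_ne (fun k _ hk => left_ne_zero_of_mul hk)).symm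
  -- Hölder estimate
  have hB1 : ∑ k ∈ B, ‖g k x‖ ≤ (B.card : ℝ) ^ (1/q) * ‖x‖ := by
    have h1 : ∑ k ∈ B, ‖g k x‖ * 1 ≤
        (∑ k ∈ B, ‖g k x‖ ^ p) ^ (1/p) * (∑ k ∈ B, (1:ℝ) ^ q) ^ (1/q) :=
      Real.inner_le_Lp_mul_Lq_of_nonneg B hq (fun _ _ => norm_nonneg _)
        (fun _ _ => zero_le_one)
    have h2 : (∑ k ∈ B, (1:ℝ) ^ q) = (B.card : ℝ) := by
      simp [Real.one_rpow]
    have h3 : (∑ k ∈ B, ‖g k x‖ ^ p) ^ (1/p) ≤ ‖x‖ := by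
      have hle : ∑ k ∈ B, ‖g k x‖ ^ p ≤ ‖x‖ ^ p := by
        rw [hg_norm x]
        exact Finset.sum_le_sum_of_subset_of_nonneg (Finset.subset_univ _)
          (fun k _ _ => Real.rpow_nonneg (norm_nonneg _) _)
      calc (∑ k ∈ B, ‖g k x‖ ^ p) ^ (1/p) ≤ (‖x‖ ^ p) ^ (1/p) :=
            Real.rpow_le_rpow (Finset.sum_nonneg (fun k _ => Real.rpow_nonneg (norm_nonneg _) _))
              hle (by positivity)
        _ = ‖x‖ := by rw [one_div, Real.rpow_rpow_inv (norm_nonneg x) hp0.ne']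
    calc ∑ k ∈ B, ‖g k x‖ = ∑ k ∈ B, ‖g k x‖ * 1 := by simp
      _ ≤ (∑ k ∈ B, ‖g k x‖ ^ p) ^ (1/p) * (∑ k ∈ B, (1:ℝ) ^ q) ^ (1/q) := h1
      _ ≤ ‖x‖ * (B.card : ℝ) ^ (1/q) := by
          rw [h2]
          exact mul_le_mul_of_nonneg_right h3 (Real.rpow_nonneg (Nat.cast_nonneg _) _)
      _ = (B.card : ℝ) ^ (1/q) * ‖x‖ := mul_comm _ _
  -- per-coordinate estimate
  have hj : ∀ j, ‖f j x‖ ≤ M * ((B.card : ℝ) ^ (1/q) * ‖x‖) := by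
    intro j
    rw [hfx j]
    calc ‖∑ k ∈ B, g k x * f j (ω k)‖ ≤ ∑ k ∈ B, ‖g k x * f j (ω k)‖ := norm_sum_le _ _
      _ = ∑ k ∈ B, ‖g k x‖ * ‖f j (ω k)‖ := by simp [norm_mul]
      _ ≤ ∑ k ∈ B, ‖g k x‖ * M :=
          Finset.sum_le_sum (fun k _ => mul_le_mul_of_nonneg_left (hMle j k) (norm_nonneg _))
      _ = M * ∑ k ∈ B, ‖g k x‖ := by rw [← Finset.sum_mul, mul_comm]
      _ ≤ M * ((B.card : ℝ) ^ (1/q) * ‖x‖) := mul_le_mul_of_nonneg_left hB1 hM0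
  -- M is positive
  have hMpos : 0 < M := by
    rcases hM0.lt_or_eq with h | h
    · exact h
    · exfalso
      have hz : ∀ j, f j x = 0 := by
        intro j
        have := hj j
        rw [← h, zero_mul] at this
        exact norm_le_zero_iff.1 this
      have := hf_norm x
      rw [Finset.sum_eq_zero (fun j _ => by
        rw [hz j, norm_zero, Real.zero_rpow hp0.ne'])] at this
      exact hxp.ne' this
  -- main estimate
  have hmain : ‖x‖ ^ p ≤ (A.card : ℝ) * (M * ((B.card : ℝ) ^ (1/q) * ‖x‖)) ^ p := by
    rw [hf_norm x]
    have hAeq : ∑ j, ‖f j x‖ ^ p = ∑ j ∈ A, ‖f j x‖ ^ p :=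
      (Finset.sum_filter_of_ne (fun j _ hne => by
        intro h0
        exact hne (by rw [h0, norm_zero, Real.zero_rpow hp0.ne']))).symm
    rw [hAeq]
    calc ∑ j ∈ A, ‖f j x‖ ^ p ≤ ∑ j ∈ A, (M * ((B.card : ℝ) ^ (1/q) * ‖x‖)) ^ p :=
          Finset.sum_le_sum (fun j _ => Real.rpow_le_rpow (norm_nonneg _) (hj j) hp0.le)
      _ = (A.card : ℝ) * (M * ((B.card : ℝ) ^ (1/q) * ‖x‖)) ^ p := by
          rw [Finset.sum_const, nsmul_eq_mul]
  -- deduce `‖x‖ ≤ ...`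
  have hC : ‖x‖ ≤ (A.card : ℝ) ^ (1/p) * M * (B.card : ℝ) ^ (1/q) * ‖x‖ := by
    rw [← Real.rpow_le_rpow_iff (norm_nonneg x) (mul_nonneg (mul_nonneg (mul_nonneg (Real.rpow_nonneg (Nat.cast_nonneg _) _) hM0) (Real.rpow_nonneg (Nat.cast_nonneg _) _)) (norm_nonneg x)) hp0]
    calc ‖x‖ ^ p ≤ (A.card : ℝ) * (M * ((B.card : ℝ) ^ (1/q) * ‖x‖)) ^ p := hmain
      _ = (A.card : ℝ) * (M ^ p * (((B.card : ℝ) ^ (1/q)) ^ p * ‖x‖ ^ p)) := by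
          rw [Real.mul_rpow hM0 (mul_nonneg (Real.rpow_nonneg (Nat.cast_nonneg _) _) (norm_nonneg x)),
            Real.mul_rpow (Real.rpow_nonneg (Nat.cast_nonneg _) _) (norm_nonneg x)]
      _ = ((A.card : ℝ) ^ (1/p)) ^ p * M ^ p * (((B.card : ℝ) ^ (1/q)) ^ p * ‖x‖ ^ p) := by
          simp only [one_div]
          rw [Real.rpow_inv_rpow (Nat.cast_nonneg _) hp0.ne']
          ring
      _ = ((A.card : ℝ) ^ (1/p) * M * (B.card : ℝ) ^ (1/q) * ‖x‖) ^ p := by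
          rw [Real.mul_rpow (mul_nonneg (mul_nonneg (Real.rpow_nonneg (Nat.cast_nonneg _) _) hM0) (Real.rpow_nonneg (Nat.cast_nonneg _) _)) (norm_nonneg x),
            Real.mul_rpow (mul_nonneg (Real.rpow_nonneg (Nat.cast_nonneg _) _) hM0) (Real.rpow_nonneg (Nat.cast_nonneg _) _),
            Real.mul_rpow (Real.rpow_nonneg (Nat.cast_nonneg _) _) hM0]
          ring
  have h1 : 1 ≤ (A.card : ℝ) ^ (1/p) * M * (B.card : ℝ) ^ (1/q) := by
    have := hC
    rw [show (A.card : ℝ) ^ (1/p) * M * (B.card : ℝ) ^ (1/q) * ‖x‖ =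
      ((A.card : ℝ) ^ (1/p) * M * (B.card : ℝ) ^ (1/q)) * ‖x‖ by ring] at this
    nth_rewrite 1 [show ‖x‖ = 1 * ‖x‖ by rw [one_mul]] at this
    exact le_of_mul_le_mul_right this hx'
  rw [hcardA, hcardB, div_le_iff₀ hMpos]
  calc 1 ≤ (A.card : ℝ) ^ (1/p) * M * (B.card : ℝ) ^ (1/q) := h1
    _ = (A.card : ℝ) ^ (1/p) * (B.card : ℝ) ^ (1/q) * M := by ring
end

section
/- Let X be a finite-dimensional Banach space over 𝕂 (ℝ or ℂ), let 1 < p < ∞ with conjugate index q (1/p + 1/q = 1), and let ({f_j}_{j=1}^n, {τ_j}_{j=1}^n) and ({g_k}_{k=1}^m, {ω_k}_{k=1}^m) be p-Schauder frames for X. Then for every x ∈ X with x ≠ 0, ‖θ_g x‖₀^{1/p} · ‖θ_f x‖₀^{1/q} ≥ 1 / max_{1≤j≤n, 1≤k≤m} |g_k(τ_j)|. -/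
/-- **Functional Donoho-Stark-Elad-Bruckstein-Ricaud-Torrésani Uncertainty Principle**
(second inequality). If `(f, τ)` and `(g, ω)` are p-Schauder frames for a
finite-dimensional Banach space `X`, then for every nonzero `x`,
`‖θ_g x‖₀^(1/p) * ‖θ_f x‖₀^(1/q) ≥ 1 / max_{j,k} |g_k(τ_j)|`. -/
theorem functional_donoho_stark_second
    {𝕂 : Type*} [RCLike 𝕂]
    {X : Type*} [NormedAddCommGroup X] [NormedSpace 𝕂 X] [FiniteDimensional 𝕂 X]
    {n m : ℕ} (p q : ℝ) (hp : 1 < p) (hpq : 1 / p + 1 / q = 1)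
    (f : Fin n → X →L[𝕂] 𝕂) (τ : Fin n → X)
    (g : Fin m → X →L[𝕂] 𝕂) (ω : Fin m → X)
    -- `(f, τ)` is a p-Schauder frame for `X` :
    (hf_norm : ∀ x : X, ‖x‖ ^ p = ∑ j, ‖f j x‖ ^ p)
    (hf_rec : ∀ x : X, x = ∑ j, f j x • τ j)
    -- `(g, ω)` is a p-Schauder frame for `X` :
    (hg_norm : ∀ x : X, ‖x‖ ^ p = ∑ k, ‖g k x‖ ^ p)
    (hg_rec : ∀ x : X, x = ∑ k, g k x • ω k)
    (x : X) (hx : x ≠ 0) :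
    1 / (⨆ (j : Fin n) (k : Fin m), ‖g k (τ j)‖) ≤
      (Nat.card {k : Fin m // g k x ≠ 0} : ℝ) ^ (1 / p) *
        (Nat.card {j : Fin n // f j x ≠ 0} : ℝ) ^ (1 / q) := by
  classical
  set M : ℝ := ⨆ (j : Fin n) (k : Fin m), ‖g k (τ j)‖ with hMdef
  set Sf : Finset (Fin n) := Finset.univ.filter (fun j => f j x ≠ 0) with hSf
  set Sg : Finset (Fin m) := Finset.univ.filter (fun k => g k x ≠ 0) with hSg
  have hcf : (Nat.card {j : Fin n // f j x ≠ 0} : ℝ) = (Sf.card : ℝ) := by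
    rw [Nat.card_eq_fintype_card, Fintype.card_subtype]
  have hcg : (Nat.card {k : Fin m // g k x ≠ 0} : ℝ) = (Sg.card : ℝ) := by
    rw [Nat.card_eq_fintype_card, Fintype.card_subtype]
  rw [hcf, hcg]
  have hp0 : (0:ℝ) < p := lt_trans one_pos hp
  have hxn : (0:ℝ) < ‖x‖ := norm_pos_iff.mpr hx
  have hxp : (0:ℝ) < ‖x‖ ^ p := Real.rpow_pos_of_pos hxn p
  have hq : 1 / q = 1 - 1 / p := by linarith
  have hM : ∀ j k, ‖g k (τ j)‖ ≤ M := by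
    intro j k
    have h1 : ‖g k (τ j)‖ ≤ ⨆ k, ‖g k (τ j)‖ :=
      le_ciSup (f := fun k => ‖g k (τ j)‖) (Set.finite_range _).bddAbove k
    exact h1.trans (le_ciSup (f := fun j => ⨆ k, ‖g k (τ j)‖)
      (Set.finite_range _).bddAbove j)
  rcases le_or_gt M 0 with hM0 | hM0
  · have h1 : 1 / M ≤ 0 := one_div_nonpos.mpr hM0
    refine h1.trans ?_
    clear hf_rec hg_rec
    positivity
  -- main case
  -- Step A : each ‖g k x‖ ≤ M * ∑ j in Sf, ‖f j x‖
  have stepA : ∀ k, ‖g k x‖ ≤ M * ∑ j ∈ Sf, ‖f j x‖ := by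
    intro k
    have hrec : g k x = ∑ j, f j x * g k (τ j) := by
      conv_lhs => rw [hf_rec x]
      simp [map_sum, smul_eq_mul]
    calc ‖g k x‖ = ‖∑ j, f j x * g k (τ j)‖ := by rw [hrec]
      _ ≤ ∑ j, ‖f j x * g k (τ j)‖ := norm_sum_le _ _
      _ = ∑ j ∈ Sf, ‖f j x‖ * ‖g k (τ j)‖ := by
          rw [Finset.sum_filter]
          refine Finset.sum_congr rfl (fun j _ => ?_)
          by_cases hj : f j x = 0
          · simp [hj]
          · simp [hj, norm_mul]
      _ ≤ ∑ j ∈ Sf, ‖f j x‖ * M := by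
          refine Finset.sum_le_sum (fun j _ => ?_)
          exact mul_le_mul_of_nonneg_left (hM j k) (norm_nonneg _)
      _ = M * ∑ j ∈ Sf, ‖f j x‖ := by rw [← Finset.sum_mul, mul_comm]
  clear hf_rec hg_rec
  -- Step B : Hölder
  have stepB : ∑ j ∈ Sf, ‖f j x‖ ≤ (Sf.card : ℝ) ^ (1/q) * ‖x‖ := by
    have h := Real.inner_le_weight_mul_Lp_of_nonneg Sf hp.le (fun _ => 1)
      (fun j => ‖f j x‖) (fun _ => zero_le_one) (fun j => norm_nonneg _)
    simp only [one_mul, Finset.sum_const, nsmul_eq_mul, mul_one] at h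
    have hsum : ∑ j ∈ Sf, ‖f j x‖ ^ p ≤ ‖x‖ ^ p := by
      rw [hf_norm x]
      refine Finset.sum_le_sum_of_subset_of_nonneg (Finset.filter_subset _ _) ?_
      intro j _ _
      positivity
    calc ∑ j ∈ Sf, ‖f j x‖ ≤ (Sf.card : ℝ) ^ (1 - p⁻¹) * (∑ j ∈ Sf, ‖f j x‖ ^ p) ^ p⁻¹ := h
      _ ≤ (Sf.card : ℝ) ^ (1 - p⁻¹) * (‖x‖ ^ p) ^ p⁻¹ := by
          refine mul_le_mul_of_nonneg_left ?_ (by positivity)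
          exact Real.rpow_le_rpow (Finset.sum_nonneg fun j _ => by positivity) hsum
            (by positivity)
      _ = (Sf.card : ℝ) ^ (1/q) * ‖x‖ := by
          rw [hq, Real.rpow_rpow_inv hxn.le (ne_of_gt hp0), one_div]
  -- Step C : sum over Sg
  have hCnn : (0:ℝ) ≤ M * ((Sf.card : ℝ) ^ (1/q) * ‖x‖) := by positivity
  have stepC : ‖x‖ ^ p ≤ (Sg.card : ℝ) * (M * ((Sf.card : ℝ) ^ (1/q) * ‖x‖)) ^ p := by
    have h1 : ‖x‖ ^ p = ∑ k ∈ Sg, ‖g k x‖ ^ p := by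
      rw [hg_norm x, Finset.sum_filter]
      refine Finset.sum_congr rfl (fun k _ => ?_)
      by_cases hk : g k x = 0
      · simp [hk, Real.zero_rpow (ne_of_gt hp0)]
      · simp [hk]
    rw [h1]
    calc ∑ k ∈ Sg, ‖g k x‖ ^ p
        ≤ ∑ k ∈ Sg, (M * ((Sf.card : ℝ) ^ (1/q) * ‖x‖)) ^ p := by
          refine Finset.sum_le_sum (fun k _ => ?_)
          refine Real.rpow_le_rpow (norm_nonneg _) ?_ hp0.le
          refine (stepA k).trans ?_
          exact mul_le_mul_of_nonneg_left stepB hM0.le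
      _ = (Sg.card : ℝ) * (M * ((Sf.card : ℝ) ^ (1/q) * ‖x‖)) ^ p := by
          rw [Finset.sum_const, nsmul_eq_mul]
  -- divide by ‖x‖^p and take p-th root
  have key : 1 ≤ (Sg.card : ℝ) * (M * (Sf.card : ℝ) ^ (1/q)) ^ p := by
    have hexp : (M * ((Sf.card : ℝ) ^ (1/q) * ‖x‖)) ^ p
        = (M * (Sf.card : ℝ) ^ (1/q)) ^ p * ‖x‖ ^ p := by
      rw [← mul_assoc, Real.mul_rpow (by positivity) hxn.le]
    rw [hexp, ← mul_assoc] at stepC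
    nlinarith [hxp, stepC]
  have key2 : 1 ≤ (Sg.card : ℝ) ^ (1/p) * (M * (Sf.card : ℝ) ^ (1/q)) := by
    have h := Real.rpow_le_rpow zero_le_one key (by positivity : (0:ℝ) ≤ 1/p)
    rw [Real.one_rpow] at h
    rw [Real.mul_rpow (by positivity) (by positivity)] at h
    rw [one_div, Real.rpow_rpow_inv (by positivity) (ne_of_gt hp0), ← one_div] at h
    exact h
  rw [div_le_iff₀ hM0]
  calc (1:ℝ) ≤ (Sg.card : ℝ) ^ (1/p) * (M * (Sf.card : ℝ) ^ (1/q)) := key2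
    _ = (Sg.card : ℝ) ^ (1/p) * (Sf.card : ℝ) ^ (1/q) * M := by ring
end

section
/- (Donoho–Stark Uncertainty Principle) For every d ∈ ℕ with d ≥ 1 and every h ∈ ℂ^d with h ≠ 0, we have ‖h‖₀ · ‖ĥ‖₀ ≥ d, where ĥ is the discrete Fourier transform of h. -/
open Finset in
/-- **Donoho-Stark Uncertainty Principle**: for every `d ≥ 1` and every nonzero
`h : ZMod d → ℂ`, `‖h‖₀ * ‖ĥ‖₀ ≥ d`, where `ĥ` is the discrete Fourier transform of `h`
and `‖·‖₀` counts nonzero entries. -/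
theorem donoho_stark_uncertainty
    (d : ℕ) [NeZero d] (hd : 1 ≤ d) (h : ZMod d → ℂ) (hh : h ≠ 0) :
    d ≤ Nat.card {j : ZMod d // h j ≠ 0} *
        Nat.card {k : ZMod d // ZMod.dft h k ≠ 0} := by
  classical
  set g := ZMod.dft h with hg
  set A : Finset (ZMod d) := univ.filter fun j => h j ≠ 0 with hA
  set B : Finset (ZMod d) := univ.filter fun k => g k ≠ 0 with hB
  have hcardA : Nat.card {j : ZMod d // h j ≠ 0} = A.card := by
    rw [Nat.card_eq_fintype_card, Fintype.card_subtype]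
  have hcardB : Nat.card {k : ZMod d // ZMod.dft h k ≠ 0} = B.card := by
    rw [Nat.card_eq_fintype_card, Fintype.card_subtype]
  rw [hcardA, hcardB]
  -- pick j0 maximizing ‖h j0‖
  obtain ⟨j0, -, hj0⟩ := Finset.exists_max_image (univ : Finset (ZMod d))
    (fun j => ‖h j‖) ⟨0, mem_univ 0⟩
  set M := ‖h j0‖ with hM
  have hMpos : 0 < M := by
    by_contra hc
    push_neg at hc
    apply hh
    funext j
    have := hj0 j (mem_univ j)
    have : ‖h j‖ ≤ 0 := le_trans this hc
    simpa using le_antisymm this (norm_nonneg _)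
  -- bound on each Fourier coefficient
  have hgk : ∀ k, ‖g k‖ ≤ A.card * M := by
    intro k
    rw [hg, ZMod.dft_apply]
    calc ‖∑ j : ZMod d, ZMod.stdAddChar (-(j * k)) • h j‖
        ≤ ∑ j : ZMod d, ‖ZMod.stdAddChar (-(j * k)) • h j‖ := norm_sum_le _ _
      _ = ∑ j : ZMod d, ‖h j‖ := by
          refine Finset.sum_congr rfl fun j _ => ?_
          rw [norm_smul]
          simp
      _ = ∑ j ∈ A, ‖h j‖ := by
          rw [Finset.sum_filter_of_ne]
          intro j _ hj
          simp only [ne_eq]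
          intro hc; simp [hc] at hj
      _ ≤ ∑ _j ∈ A, M := Finset.sum_le_sum fun j _ => hj0 j (mem_univ j)
      _ = A.card * M := by rw [Finset.sum_const, nsmul_eq_mul]
  -- inversion bound
  have hinv : M ≤ (d : ℝ)⁻¹ * (B.card * (A.card * M)) := by
    have hrec : h j0 = (d : ℂ)⁻¹ • ZMod.dft g (-j0) := by
      have := congrFun (ZMod.dft.symm_apply_apply h) j0
      rw [← this, ZMod.invDFT_apply']
    calc M = ‖(d : ℂ)⁻¹ • ZMod.dft g (-j0)‖ := by rw [hM, hrec]
      _ = (d : ℝ)⁻¹ * ‖ZMod.dft g (-j0)‖ := by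
          rw [norm_smul]
          simp
      _ ≤ (d : ℝ)⁻¹ * (B.card * (A.card * M)) := by
          refine mul_le_mul_of_nonneg_left ?_ (by positivity)
          rw [ZMod.dft_apply]
          calc ‖∑ k : ZMod d, ZMod.stdAddChar (-(k * -j0)) • g k‖
              ≤ ∑ k : ZMod d, ‖ZMod.stdAddChar (-(k * -j0)) • g k‖ := norm_sum_le _ _
            _ = ∑ k : ZMod d, ‖g k‖ := by
                refine Finset.sum_congr rfl fun k _ => ?_
                rw [norm_smul]; simp
            _ = ∑ k ∈ B, ‖g k‖ := by
                rw [Finset.sum_filter_of_ne]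
                intro k _ hk
                intro hc; simp [hc] at hk
            _ ≤ ∑ _k ∈ B, (A.card * M) := Finset.sum_le_sum fun k _ => hgk k
            _ = B.card * (A.card * M) := by rw [Finset.sum_const, nsmul_eq_mul]
  -- conclude
  have hdpos : (0 : ℝ) < d := by exact_mod_cast Nat.pos_of_ne_zero (NeZero.ne d)
  have : (d : ℝ) * M ≤ (A.card * B.card) * M := by
    have := mul_le_mul_of_nonneg_left hinv (le_of_lt hdpos)
    calc (d : ℝ) * M ≤ (d : ℝ) * ((d : ℝ)⁻¹ * (B.card * (A.card * M))) := this
      _ = (A.card * B.card) * M := by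
          field_simp
  have : (d : ℝ) ≤ A.card * B.card := le_of_mul_le_mul_right (by simpa using this) hMpos
  exact_mod_cast this
end

section
/- (Donoho–Stark Uncertainty Principle, additive form) For every d ∈ ℕ with d ≥ 1 and every h ∈ ℂ^d with h ≠ 0, we have ((‖h‖₀ + ‖ĥ‖₀)/2)² ≥ ‖h‖₀ · ‖ĥ‖₀ ≥ d; in particular ‖h‖₀ + ‖ĥ‖₀ ≥ 2√d, where ĥ is the discrete Fourier transform of h. -/
open Finset

lemma ds_key (d : ℕ) [NeZero d] (h : ZMod d → ℂ) (hh : h ≠ 0) :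
    d ≤ (univ.filter fun j => h j ≠ 0).card * (univ.filter fun k => ZMod.dft h k ≠ 0).card := by
  set A := univ.filter fun j : ZMod d => h j ≠ 0 with hA
  set B := univ.filter fun k : ZMod d => ZMod.dft h k ≠ 0 with hB
  have hchar : ∀ x : ZMod d, ‖ZMod.stdAddChar x‖ = 1 := fun x => by
    rw [ZMod.stdAddChar_apply]; exact (ZMod.toCircle x).norm_coe
  -- max of ‖h‖
  obtain ⟨j₀, -, hj₀⟩ := Finset.exists_max_image (univ : Finset (ZMod d)) (fun j => ‖h j‖)
    ⟨0, mem_univ 0⟩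
  obtain ⟨k₀, -, hk₀⟩ := Finset.exists_max_image (univ : Finset (ZMod d)) (fun k => ‖ZMod.dft h k‖)
    ⟨0, mem_univ 0⟩
  have hM : 0 < ‖h j₀‖ := by
    obtain ⟨j, hj⟩ := Function.ne_iff.mp hh
    exact lt_of_lt_of_le (norm_pos_iff.mpr hj) (hj₀ j (mem_univ j))
  -- step 1 : ‖𝓕 h k‖ ≤ A.card * ‖h j₀‖
  have step1 : ∀ k, ‖ZMod.dft h k‖ ≤ A.card * ‖h j₀‖ := by
    intro k
    rw [ZMod.dft_apply]
    calc ‖∑ j, ZMod.stdAddChar (-(j * k)) • h j‖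
        ≤ ∑ j, ‖ZMod.stdAddChar (-(j * k)) • h j‖ := norm_sum_le _ _
      _ = ∑ j, ‖h j‖ := by
          simp [smul_eq_mul, norm_mul, hchar]
      _ = ∑ j ∈ A, ‖h j‖ := by
          rw [eq_comm]
          apply Finset.sum_subset (Finset.subset_univ A)
          intro x _ hx
          simp only [hA, mem_filter, mem_univ, true_and, not_not] at hx
          simp [hx]
      _ ≤ ∑ _j ∈ A, ‖h j₀‖ := Finset.sum_le_sum fun j _ => hj₀ j (mem_univ j)
      _ = A.card * ‖h j₀‖ := by rw [Finset.sum_const, nsmul_eq_mul]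
  -- step 2 : d * ‖h j₀‖ ≤ B.card * ‖𝓕 h k₀‖
  have step2 : (d : ℝ) * ‖h j₀‖ ≤ B.card * ‖ZMod.dft h k₀‖ := by
    have hinv : (d : ℂ) • h j₀ = ZMod.dft (ZMod.dft h) (-j₀) := by
      rw [ZMod.dft_dft]; simp
    calc (d : ℝ) * ‖h j₀‖ = ‖(d : ℂ) • h j₀‖ := by
          rw [norm_smul]; simp
      _ = ‖ZMod.dft (ZMod.dft h) (-j₀)‖ := by rw [hinv]
      _ ≤ ∑ k, ‖ZMod.dft h k‖ := by
          rw [ZMod.dft_apply]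
          refine le_trans (norm_sum_le _ _) (le_of_eq ?_)
          simp [smul_eq_mul, norm_mul, hchar]
      _ = ∑ k ∈ B, ‖ZMod.dft h k‖ := by
          rw [eq_comm]
          apply Finset.sum_subset (Finset.subset_univ B)
          intro x _ hx
          simp only [hB, mem_filter, mem_univ, true_and, not_not] at hx
          simp [hx]
      _ ≤ ∑ _k ∈ B, ‖ZMod.dft h k₀‖ := Finset.sum_le_sum fun k _ => hk₀ k (mem_univ k)
      _ = B.card * ‖ZMod.dft h k₀‖ := by rw [Finset.sum_const, nsmul_eq_mul]
  have : (d : ℝ) * ‖h j₀‖ ≤ (A.card * B.card : ℝ) * ‖h j₀‖ := by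
    calc (d : ℝ) * ‖h j₀‖ ≤ B.card * ‖ZMod.dft h k₀‖ := step2
      _ ≤ B.card * (A.card * ‖h j₀‖) := by
          exact mul_le_mul_of_nonneg_left (step1 k₀) (by positivity)
      _ = (A.card * B.card : ℝ) * ‖h j₀‖ := by ring
  have hfin : (d : ℝ) ≤ (A.card : ℝ) * (B.card : ℝ) :=
    le_of_mul_le_mul_right (by linarith [this]) hM
  exact_mod_cast hfin

/-- **Donoho-Stark Uncertainty Principle, additive form**: for every `d ≥ 1` and every
nonzero `h : ZMod d → ℂ`, `((‖h‖₀ + ‖ĥ‖₀)/2)² ≥ ‖h‖₀ * ‖ĥ‖₀ ≥ d`; in particular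
`‖h‖₀ + ‖ĥ‖₀ ≥ 2√d`, where `ĥ` is the discrete Fourier transform of `h`. -/
theorem donoho_stark_uncertainty_additive
    (d : ℕ) [NeZero d] (hd : 1 ≤ d) (h : ZMod d → ℂ) (hh : h ≠ 0) :
    ((((Nat.card {j : ZMod d // h j ≠ 0} : ℝ) +
        (Nat.card {k : ZMod d // ZMod.dft h k ≠ 0} : ℝ)) / 2) ^ 2 ≥
      (Nat.card {j : ZMod d // h j ≠ 0} : ℝ) *
        (Nat.card {k : ZMod d // ZMod.dft h k ≠ 0} : ℝ)) ∧
    ((Nat.card {j : ZMod d // h j ≠ 0} : ℝ) *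
        (Nat.card {k : ZMod d // ZMod.dft h k ≠ 0} : ℝ) ≥ d) ∧
    ((Nat.card {j : ZMod d // h j ≠ 0} : ℝ) +
        (Nat.card {k : ZMod d // ZMod.dft h k ≠ 0} : ℝ) ≥ 2 * Real.sqrt d) := by
  have key := ds_key d h hh
  have e1 : Nat.card {j : ZMod d // h j ≠ 0} = (univ.filter fun j : ZMod d => h j ≠ 0).card := by
    rw [Nat.card_eq_fintype_card, Fintype.card_subtype]
  have e2 : Nat.card {k : ZMod d // ZMod.dft h k ≠ 0}
      = (univ.filter fun k : ZMod d => ZMod.dft h k ≠ 0).card := by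
    rw [Nat.card_eq_fintype_card, Fintype.card_subtype]
  set a : ℝ := (Nat.card {j : ZMod d // h j ≠ 0} : ℝ)
  set b : ℝ := (Nat.card {k : ZMod d // ZMod.dft h k ≠ 0} : ℝ)
  have hab : (d : ℝ) ≤ a * b := by
    simp only [a, b, e1, e2]
    exact_mod_cast key
  have ha : 0 ≤ a := Nat.cast_nonneg _
  have hb : 0 ≤ b := Nat.cast_nonneg _
  refine ⟨by nlinarith [sq_nonneg (a - b)], hab, ?_⟩
  have h1 : Real.sqrt d ≤ (a + b) / 2 := by
    have : Real.sqrt d ≤ Real.sqrt (((a + b) / 2) ^ 2) := by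
      apply Real.sqrt_le_sqrt; nlinarith [sq_nonneg (a - b)]
    rwa [Real.sqrt_sq (by positivity)] at this
  linarith
end

section
/- (Elad–Bruckstein Uncertainty Principle) Let {τ_j}_{j=1}^n and {ω_j}_{j=1}^n be two orthonormal bases for an n-dimensional Hilbert space H over 𝕂 (ℝ or ℂ). Then for every h ∈ H with h ≠ 0, ‖θ_τ h‖₀ · ‖θ_ω h‖₀ ≥ 1 / max_{1≤j,k≤n} |⟨τ_j, ω_k⟩|². -/
open Finset

/-- **Elad-Bruckstein Uncertainty Principle**: if `τ` and `ω` are two orthonormal bases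
for an `n`-dimensional Hilbert space `H`, then for every nonzero `h`,
`‖θ_τ h‖₀ * ‖θ_ω h‖₀ ≥ 1 / max_{j,k} |⟪τ_j, ω_k⟫|²`. -/
theorem elad_bruckstein_uncertainty
    {𝕂 : Type*} [RCLike 𝕂]
    {H : Type*} [NormedAddCommGroup H] [InnerProductSpace 𝕂 H]
    {n : ℕ} (τ ω : OrthonormalBasis (Fin n) 𝕂 H)
    (h : H) (hh : h ≠ 0) :
    1 / (⨆ (j : Fin n) (k : Fin n), ‖(inner 𝕂 (τ j) (ω k) : 𝕂)‖ ^ 2) ≤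
      (Nat.card {j : Fin n // (inner 𝕂 h (τ j) : 𝕂) ≠ 0} : ℝ) *
        (Nat.card {k : Fin n // (inner 𝕂 h (ω k) : 𝕂) ≠ 0} : ℝ) := by
  classical
  set c : Fin n → 𝕂 := fun j => inner 𝕂 (τ j) h with hc
  set d : Fin n → 𝕂 := fun k => inner 𝕂 (ω k) h with hd
  set M : ℝ := ⨆ (j : Fin n) (k : Fin n), ‖(inner 𝕂 (τ j) (ω k) : 𝕂)‖ ^ 2 with hM
  set S : Finset (Fin n) := univ.filter (fun j => c j ≠ 0) with hS
  set T : Finset (Fin n) := univ.filter (fun k => d k ≠ 0) with hT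
  have cardS : (Nat.card {j : Fin n // (inner 𝕂 h (τ j) : 𝕂) ≠ 0} : ℕ) = S.card := by
    rw [Nat.card_eq_fintype_card, Fintype.card_subtype]
    congr 1; ext j
    simp [hS, hc, ← inner_eq_zero_symm (𝕜 := 𝕂) (x := h)]
  have cardT : (Nat.card {k : Fin n // (inner 𝕂 h (ω k) : 𝕂) ≠ 0} : ℕ) = T.card := by
    rw [Nat.card_eq_fintype_card, Fintype.card_subtype]
    congr 1; ext k
    simp [hT, hd, ← inner_eq_zero_symm (𝕜 := 𝕂) (x := h)]
  have normc : ‖h‖ ^ 2 = ∑ j, ‖c j‖ ^ 2 := by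
    have := τ.repr.norm_map h
    rw [← this, EuclideanSpace.norm_eq, Real.sq_sqrt (by positivity)]
    simp [τ.repr_apply_apply, hc]
  have normd : ‖h‖ ^ 2 = ∑ k, ‖d k‖ ^ 2 := by
    have := ω.repr.norm_map h
    rw [← this, EuclideanSpace.norm_eq, Real.sq_sqrt (by positivity)]
    simp [ω.repr_apply_apply, hd]
  rcases Nat.eq_zero_or_pos n with hn | hn
  · exfalso
    apply hh
    have : τ.repr h = 0 := by subst hn; exact Subsingleton.elim _ _
    simpa using congrArg τ.repr.symm this
  have : Nonempty (Fin n) := ⟨⟨0, hn⟩⟩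
  have hMbd : ∀ j k : Fin n, ‖(inner 𝕂 (τ j) (ω k) : 𝕂)‖ ^ 2 ≤ M := by
    intro j k
    refine le_ciSup_of_le ?_ j (le_ciSup (f := fun k => ‖(inner 𝕂 (τ j) (ω k) : 𝕂)‖ ^ 2) ?_ k)
    · apply Set.Finite.bddAbove
      apply Set.Finite.subset (Set.finite_range
        (fun p : Fin n × Fin n => ⨆ k, ‖(inner 𝕂 (τ p.1) (ω k) : 𝕂)‖ ^ 2))
      rintro x ⟨j, rfl⟩; exact ⟨(j, j), rfl⟩
    · exact Set.finite_range _ |>.bddAbove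
  have hM0 : 0 ≤ M := le_trans (by positivity) (hMbd ⟨0, hn⟩ ⟨0, hn⟩)
  have key : ∀ k : Fin n, ‖d k‖ ^ 2 ≤ M * S.card * ‖h‖ ^ 2 := by
    intro k
    have expand : d k = ∑ j, inner 𝕂 (ω k) (τ j) * c j := by
      rw [hd]; exact (τ.sum_inner_mul_inner (ω k) h).symm
    have h1 : ‖d k‖ ≤ Real.sqrt M * ∑ j ∈ S, ‖c j‖ := by
      rw [expand]
      calc ‖∑ j, (inner 𝕂 (ω k) (τ j) : 𝕂) * c j‖
          ≤ ∑ j, ‖(inner 𝕂 (ω k) (τ j) : 𝕂) * c j‖ := norm_sum_le _ _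
        _ = ∑ j ∈ S, ‖(inner 𝕂 (ω k) (τ j) : 𝕂) * c j‖ := by
            refine (Finset.sum_subset S.subset_univ fun j _ hj => ?_).symm
            have : c j = 0 := by simpa [hS] using hj
            simp [this]
        _ = ∑ j ∈ S, ‖(inner 𝕂 (ω k) (τ j) : 𝕂)‖ * ‖c j‖ := by simp [norm_mul]
        _ ≤ ∑ j ∈ S, Real.sqrt M * ‖c j‖ := by
            apply Finset.sum_le_sum
            intro j _
            apply mul_le_mul_of_nonneg_right _ (norm_nonneg _)
            rw [norm_inner_symm]
            exact (Real.le_sqrt (norm_nonneg _) hM0).mpr (hMbd j k)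
        _ = Real.sqrt M * ∑ j ∈ S, ‖c j‖ := by rw [Finset.mul_sum]
    have h2 : (∑ j ∈ S, ‖c j‖) ^ 2 ≤ S.card * ∑ j ∈ S, ‖c j‖ ^ 2 :=
      sq_sum_le_card_mul_sum_sq
    have h3 : ∑ j ∈ S, ‖c j‖ ^ 2 ≤ ‖h‖ ^ 2 := by
      rw [normc]
      apply Finset.sum_le_sum_of_subset_of_nonneg (Finset.subset_univ _)
      intros; positivity
    calc ‖d k‖ ^ 2 ≤ (Real.sqrt M * ∑ j ∈ S, ‖c j‖) ^ 2 :=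
          pow_le_pow_left₀ (norm_nonneg _) h1 2
      _ = M * (∑ j ∈ S, ‖c j‖) ^ 2 := by rw [mul_pow, Real.sq_sqrt hM0]
      _ ≤ M * (S.card * ∑ j ∈ S, ‖c j‖ ^ 2) := mul_le_mul_of_nonneg_left h2 hM0
      _ ≤ M * (S.card * ‖h‖ ^ 2) :=
          mul_le_mul_of_nonneg_left (mul_le_mul_of_nonneg_left h3 (by positivity)) hM0
      _ = M * S.card * ‖h‖ ^ 2 := by ring
  have main : ‖h‖ ^ 2 ≤ T.card * (M * S.card * ‖h‖ ^ 2) := by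
    calc ‖h‖ ^ 2 = ∑ k ∈ T, ‖d k‖ ^ 2 := by
          rw [normd]
          refine (Finset.sum_subset T.subset_univ fun k _ hk => ?_).symm
          have : d k = 0 := by simpa [hT] using hk
          simp [this]
      _ ≤ ∑ k ∈ T, M * S.card * ‖h‖ ^ 2 := Finset.sum_le_sum fun k _ => key k
      _ = T.card * (M * S.card * ‖h‖ ^ 2) := by rw [Finset.sum_const, nsmul_eq_mul]
  have hh2 : (0:ℝ) < ‖h‖ ^ 2 := pow_pos (norm_pos_iff.mpr hh) 2
  have final : 1 ≤ M * S.card * T.card := by nlinarith [main, hh2]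
  have hMpos : 0 < M := by
    by_contra hle
    push_neg at hle
    nlinarith [mul_nonneg (Nat.cast_nonneg (α := ℝ) S.card) (Nat.cast_nonneg (α := ℝ) T.card)]
  rw [cardS, cardT, div_le_iff₀ hMpos]
  exact le_of_le_of_eq final (by ring)
end

section
/- (Ricaud–Torrésani Uncertainty Principle) Let {τ_j}_{j=1}^n and {ω_j}_{j=1}^n be two Parseval frames for a finite-dimensional Hilbert space H over 𝕂 (ℝ or ℂ). Then for every h ∈ H with h ≠ 0, ‖θ_τ h‖₀ · ‖θ_ω h‖₀ ≥ 1 / max_{1≤j,k≤n} |⟨τ_j, ω_k⟩|². -/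
open Finset

section Aux

variable {𝕂 : Type*} [RCLike 𝕂] {H : Type*} [NormedAddCommGroup H] [InnerProductSpace 𝕂 H]

/-- Reconstruction formula for a Parseval frame. -/
lemma parseval_recon {n : ℕ} (ω : Fin n → H)
    (hω : ∀ h : H, ‖h‖ ^ 2 = ∑ k, ‖(inner 𝕂 h (ω k) : 𝕂)‖ ^ 2) (x : H) :
    ∑ k, (inner 𝕂 (ω k) x : 𝕂) • ω k = x := by
  classical
  let S : H →ₗ[𝕂] H :=
  { toFun := fun x => ∑ k, (inner 𝕂 (ω k) x : 𝕂) • ω k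
    map_add' := by
      intro a b
      simp [inner_add_right, add_smul, Finset.sum_add_distrib]
    map_smul' := by
      intro c a
      simp [inner_smul_right, smul_smul, Finset.smul_sum] }
  have hsymm : (S - LinearMap.id).IsSymmetric := by
    intro a b
    simp only [LinearMap.sub_apply, LinearMap.id_apply, inner_sub_left, inner_sub_right,
      S, LinearMap.coe_mk, AddHom.coe_mk, sum_inner, inner_sum, inner_smul_left,
      inner_smul_right, inner_conj_symm]
    congr 1
    exact Finset.sum_congr rfl fun k _ => mul_comm _ _
  have hzero : ∀ x : H, (inner 𝕂 ((S - LinearMap.id : H →ₗ[𝕂] H) x) x : 𝕂) = 0 := by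
    intro x
    have h1 : (inner 𝕂 (S x) x : 𝕂) = ((∑ k, ‖(inner 𝕂 x (ω k) : 𝕂)‖ ^ 2 : ℝ) : 𝕂) := by
      simp only [S, LinearMap.coe_mk, AddHom.coe_mk, sum_inner, inner_smul_left]
      rw [RCLike.ofReal_sum]
      refine Finset.sum_congr rfl fun k _ => ?_
      rw [RCLike.conj_mul, norm_inner_symm]
      norm_cast
    have h2 : (inner 𝕂 x x : 𝕂) = ((‖x‖ ^ 2 : ℝ) : 𝕂) := by
      rw [inner_self_eq_norm_sq_to_K]
      norm_cast
    simp only [LinearMap.sub_apply, LinearMap.id_apply, inner_sub_left, h1, h2, ← hω x]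
    simp
  have hS : S - LinearMap.id = 0 := hsymm.inner_map_self_eq_zero.mp hzero
  have hSx : S x = x := by
    have := sub_eq_zero.mp hS
    rw [this]; rfl
  simpa [S] using hSx

end Aux

/-- **Ricaud-Torrésani Uncertainty Principle**: if `τ` and `ω` are two Parseval frames
for a finite-dimensional Hilbert space `H`, then for every nonzero `h`,
`‖θ_τ h‖₀ * ‖θ_ω h‖₀ ≥ 1 / max_{j,k} |⟪τ_j, ω_k⟫|²`. -/
theorem ricaud_torresani_uncertainty
    {𝕂 : Type*} [RCLike 𝕂]
    {H : Type*} [NormedAddCommGroup H] [InnerProductSpace 𝕂 H] [FiniteDimensional 𝕂 H]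
    {n : ℕ} (τ ω : Fin n → H)
    -- `τ` and `ω` are Parseval frames for `H` :
    (hτ : ∀ h : H, ‖h‖ ^ 2 = ∑ j, ‖(inner 𝕂 h (τ j) : 𝕂)‖ ^ 2)
    (hω : ∀ h : H, ‖h‖ ^ 2 = ∑ k, ‖(inner 𝕂 h (ω k) : 𝕂)‖ ^ 2)
    (h : H) (hh : h ≠ 0) :
    1 / (⨆ (j : Fin n) (k : Fin n), ‖(inner 𝕂 (τ j) (ω k) : 𝕂)‖ ^ 2) ≤
      (Nat.card {j : Fin n // (inner 𝕂 h (τ j) : 𝕂) ≠ 0} : ℝ) *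
        (Nat.card {k : Fin n // (inner 𝕂 h (ω k) : 𝕂) ≠ 0} : ℝ) := by
  classical
  have hn : 0 < n := by
    rcases Nat.eq_zero_or_pos n with h0 | h0
    · exfalso
      subst h0
      have h2 : ‖h‖ ^ 2 = 0 := by simpa using hτ h
      have h3 : ‖h‖ = 0 := by nlinarith [norm_nonneg h]
      exact hh (norm_eq_zero.mp h3)
    · exact h0
  haveI : Nonempty (Fin n) := Fin.pos_iff_nonempty.mp hn
  set M : ℝ := ⨆ (j : Fin n) (k : Fin n), ‖(inner 𝕂 (τ j) (ω k) : 𝕂)‖ ^ 2 with hM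
  set T : Finset (Fin n) := Finset.univ.filter fun j => (inner 𝕂 h (τ j) : 𝕂) ≠ 0 with hT
  set W : Finset (Fin n) := Finset.univ.filter fun k => (inner 𝕂 h (ω k) : 𝕂) ≠ 0 with hW
  have hcardT : (Nat.card {j : Fin n // (inner 𝕂 h (τ j) : 𝕂) ≠ 0} : ℝ) = (T.card : ℝ) := by
    rw [Nat.card_eq_fintype_card, Fintype.card_subtype]
  have hcardW : (Nat.card {k : Fin n // (inner 𝕂 h (ω k) : 𝕂) ≠ 0} : ℝ) = (W.card : ℝ) := by
    rw [Nat.card_eq_fintype_card, Fintype.card_subtype]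
  have hbdd : ∀ j k, ‖(inner 𝕂 (τ j) (ω k) : 𝕂)‖ ^ 2 ≤ M :=
    fun j k =>
      le_trans
        (le_ciSup (f := fun k => ‖(inner 𝕂 (τ j) (ω k) : 𝕂)‖ ^ 2)
          (Set.Finite.bddAbove (Set.finite_range _)) k)
        (le_ciSup (f := fun j => ⨆ k, ‖(inner 𝕂 (τ j) (ω k) : 𝕂)‖ ^ 2)
          (Set.Finite.bddAbove (Set.finite_range _)) j)
  have hM0 : 0 ≤ M := le_trans (sq_nonneg _) (hbdd ⟨0, hn⟩ ⟨0, hn⟩)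
  have key : ∀ j, ‖(inner 𝕂 h (τ j) : 𝕂)‖ ^ 2 ≤ (W.card : ℝ) * M * ‖h‖ ^ 2 := by
    intro j
    have hrec : (inner 𝕂 h (τ j) : 𝕂) = ∑ k, (inner 𝕂 (ω k) (τ j) : 𝕂) * (inner 𝕂 h (ω k) : 𝕂) := by
      conv_lhs => rw [← parseval_recon ω hω (τ j)]
      simp [inner_sum, inner_smul_right, mul_comm]
    have h1 : ‖(inner 𝕂 h (τ j) : 𝕂)‖
        ≤ ∑ k ∈ W, ‖(inner 𝕂 (ω k) (τ j) : 𝕂)‖ * ‖(inner 𝕂 h (ω k) : 𝕂)‖ := by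
      rw [hrec]
      refine le_trans (norm_sum_le _ _) (le_of_eq ?_)
      simp only [norm_mul]
      refine (Finset.sum_subset W.subset_univ fun k _ hk => ?_).symm
      have : (inner 𝕂 h (ω k) : 𝕂) = 0 := by
        by_contra hc
        exact hk (by simp [hW, hc])
      simp [this]
    have h2 : ‖(inner 𝕂 h (τ j) : 𝕂)‖ ^ 2
        ≤ (∑ k ∈ W, ‖(inner 𝕂 (ω k) (τ j) : 𝕂)‖ ^ 2) * (∑ k ∈ W, ‖(inner 𝕂 h (ω k) : 𝕂)‖ ^ 2) :=
      le_trans (pow_le_pow_left₀ (norm_nonneg _) h1 2)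
        (Finset.sum_mul_sq_le_sq_mul_sq W _ _)
    have h3 : ∑ k ∈ W, ‖(inner 𝕂 (ω k) (τ j) : 𝕂)‖ ^ 2 ≤ (W.card : ℝ) * M := by
      calc ∑ k ∈ W, ‖(inner 𝕂 (ω k) (τ j) : 𝕂)‖ ^ 2 ≤ ∑ _k ∈ W, M :=
            Finset.sum_le_sum fun k _ => by rw [norm_inner_symm]; exact hbdd j k
        _ = (W.card : ℝ) * M := by rw [Finset.sum_const, nsmul_eq_mul]
    have h4 : ∑ k ∈ W, ‖(inner 𝕂 h (ω k) : 𝕂)‖ ^ 2 ≤ ‖h‖ ^ 2 := by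
      rw [hω h]
      exact Finset.sum_le_sum_of_subset_of_nonneg W.subset_univ fun k _ _ => sq_nonneg _
    calc ‖(inner 𝕂 h (τ j) : 𝕂)‖ ^ 2
        ≤ (∑ k ∈ W, ‖(inner 𝕂 (ω k) (τ j) : 𝕂)‖ ^ 2) * (∑ k ∈ W, ‖(inner 𝕂 h (ω k) : 𝕂)‖ ^ 2) := h2
      _ ≤ (W.card : ℝ) * M * ‖h‖ ^ 2 :=
          mul_le_mul h3 h4 (Finset.sum_nonneg fun k _ => sq_nonneg _)
            (mul_nonneg (Nat.cast_nonneg _) hM0)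
  have main : ‖h‖ ^ 2 ≤ (T.card : ℝ) * ((W.card : ℝ) * M * ‖h‖ ^ 2) := by
    have e1 : ∑ j, ‖(inner 𝕂 h (τ j) : 𝕂)‖ ^ 2 = ∑ j ∈ T, ‖(inner 𝕂 h (τ j) : 𝕂)‖ ^ 2 := by
      refine (Finset.sum_subset T.subset_univ fun j _ hj => ?_).symm
      have : (inner 𝕂 h (τ j) : 𝕂) = 0 := by
        by_contra hc
        exact hj (by simp [hT, hc])
      simp [this]
    calc ‖h‖ ^ 2 = ∑ j ∈ T, ‖(inner 𝕂 h (τ j) : 𝕂)‖ ^ 2 := by rw [hτ h, e1]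
      _ ≤ ∑ _j ∈ T, (W.card : ℝ) * M * ‖h‖ ^ 2 :=
          Finset.sum_le_sum fun j _ => key j
      _ = (T.card : ℝ) * ((W.card : ℝ) * M * ‖h‖ ^ 2) := by
          rw [Finset.sum_const, nsmul_eq_mul]
  have hpos : 0 < ‖h‖ ^ 2 := by
    have := norm_pos_iff.mpr hh
    positivity
  have h5 : 1 ≤ (T.card : ℝ) * (W.card : ℝ) * M := by
    nlinarith [main, hpos]
  have hMpos : 0 < M := by
    rcases lt_or_eq_of_le hM0 with h' | h'
    · exact h'
    · exfalso
      rw [← h'] at h5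
      simp at h5
      linarith
  rw [hcardT, hcardW, div_le_iff₀ hMpos]
  exact h5
end

section
/- (Donoho–Elad Sparsity Theorem) Let {τ_j}_{j=1}^n be a family of unit vectors spanning a finite-dimensional Hilbert space H over 𝕂 (ℝ or ℂ), with coherence M = max_{1≤j,k≤n, j≠k} |⟨τ_j, τ_k⟩| > 0. Suppose h ∈ H can be written as h = ∑_{j=1}^n c_j τ_j for some c ∈ 𝕂^n with ‖c‖₀ < (1/2)(1 + 1/M). Then c is the unique solution of the ℓ₀-minimization problem: for every d ∈ 𝕂^n with h = ∑_{j=1}^n d_j τ_j and d ≠ c, we have ‖d‖₀ > ‖c‖₀. -/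
/-- **Donoho-Elad Sparsity Theorem**: let `τ` be a family of unit vectors spanning a
finite-dimensional Hilbert space `H` with coherence `M > 0`. If `h = ∑ j, c j • τ j` with
`‖c‖₀ < (1/2)(1 + 1/M)`, then `c` is the unique solution of the `ℓ₀`-minimization
problem: any other representation `h = ∑ j, d j • τ j` with `d ≠ c` satisfies
`‖d‖₀ > ‖c‖₀`. -/
theorem donoho_elad_sparsity
    {𝕂 : Type*} [RCLike 𝕂]
    {H : Type*} [NormedAddCommGroup H] [InnerProductSpace 𝕂 H] [FiniteDimensional 𝕂 H]
    {n : ℕ} (τ : Fin n → H)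
    (hunit : ∀ j, ‖τ j‖ = 1)
    (hspan : Submodule.span 𝕂 (Set.range τ) = ⊤)
    (M : ℝ)
    (hM : M = ⨆ (j : Fin n) (k : Fin n) (_ : j ≠ k), ‖(inner 𝕂 (τ j) (τ k) : 𝕂)‖)
    (hM0 : 0 < M)
    (h : H) (c : Fin n → 𝕂)
    (hc : h = ∑ j, c j • τ j)
    (hsparse : (Nat.card {j : Fin n // c j ≠ 0} : ℝ) < (1 / 2) * (1 + 1 / M)) :
    ∀ d : Fin n → 𝕂, h = ∑ j, d j • τ j → d ≠ c →
      Nat.card {j : Fin n // c j ≠ 0} < Nat.card {j : Fin n // d j ≠ 0} := by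
  classical
  -- coherence bound
  have hMle : ∀ j k : Fin n, j ≠ k → ‖(inner 𝕂 (τ j) (τ k) : 𝕂)‖ ≤ M := by
    intro j k hjk
    rw [hM]
    calc ‖(inner 𝕂 (τ j) (τ k) : 𝕂)‖
        ≤ ⨆ (_ : j ≠ k), ‖(inner 𝕂 (τ j) (τ k) : 𝕂)‖ :=
          le_ciSup (f := fun _ : j ≠ k => ‖(inner 𝕂 (τ j) (τ k) : 𝕂)‖)
            (Set.finite_range _).bddAbove hjk
      _ ≤ ⨆ (k : Fin n), ⨆ (_ : j ≠ k), ‖(inner 𝕂 (τ j) (τ k) : 𝕂)‖ :=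
          le_ciSup (f := fun k : Fin n => ⨆ (_ : j ≠ k), ‖(inner 𝕂 (τ j) (τ k) : 𝕂)‖)
            (Set.finite_range _).bddAbove k
      _ ≤ ⨆ (j : Fin n), ⨆ (k : Fin n), ⨆ (_ : j ≠ k), ‖(inner 𝕂 (τ j) (τ k) : 𝕂)‖ :=
          le_ciSup (f := fun j : Fin n => ⨆ (k : Fin n), ⨆ (_ : j ≠ k),
            ‖(inner 𝕂 (τ j) (τ k) : 𝕂)‖) (Set.finite_range _).bddAbove j
  -- key lemma: any nonzero null vector has support of size ≥ 1 + 1/M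
  have key : ∀ u : Fin n → 𝕂, (∑ j, u j • τ j) = 0 → u ≠ 0 →
      1 + 1 / M ≤ ((Finset.univ.filter (fun j => u j ≠ 0)).card : ℝ) := by
    intro u hu hune
    set s := Finset.univ.filter (fun j => u j ≠ 0) with hs
    have hsne : s.Nonempty := by
      obtain ⟨j, hj⟩ := Function.ne_iff.mp hune
      refine ⟨j, ?_⟩
      simp only [hs, Finset.mem_filter, Finset.mem_univ, true_and]
      simpa using hj
    obtain ⟨j₀, hj₀s, hj₀max⟩ := s.exists_max_image (fun j => ‖u j‖) hsne
    have hj₀ : u j₀ ≠ 0 := by simpa [hs] using hj₀s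
    have ha : 0 < ‖u j₀‖ := norm_pos_iff.mpr hj₀
    have h0 : (∑ j, u j * (inner 𝕂 (τ j₀) (τ j) : 𝕂)) = 0 := by
      have : (inner 𝕂 (τ j₀) (∑ j, u j • τ j) : 𝕂) = 0 := by rw [hu, inner_zero_right]
      simpa [inner_sum, inner_smul_right] using this
    have hdiag : (inner 𝕂 (τ j₀) (τ j₀) : 𝕂) = 1 := by
      rw [inner_self_eq_norm_sq_to_K, hunit j₀]
      norm_num
    have hsplit : u j₀ = - ∑ j ∈ Finset.univ.erase j₀, u j * (inner 𝕂 (τ j₀) (τ j) : 𝕂) := by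
      have := Finset.add_sum_erase Finset.univ
        (fun j => u j * (inner 𝕂 (τ j₀) (τ j) : 𝕂)) (Finset.mem_univ j₀)
      rw [h0] at this
      simp only [hdiag, mul_one] at this
      linear_combination this
    have hbound : ‖u j₀‖ ≤ ((s.card : ℝ) - 1) * (M * ‖u j₀‖) := by
      calc ‖u j₀‖ = ‖∑ j ∈ Finset.univ.erase j₀, u j * (inner 𝕂 (τ j₀) (τ j) : 𝕂)‖ := by
            rw [hsplit, norm_neg]
        _ ≤ ∑ j ∈ Finset.univ.erase j₀, ‖u j * (inner 𝕂 (τ j₀) (τ j) : 𝕂)‖ :=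
            norm_sum_le _ _
        _ = ∑ j ∈ s.erase j₀, ‖u j * (inner 𝕂 (τ j₀) (τ j) : 𝕂)‖ := by
            refine (Finset.sum_subset ?_ ?_).symm
            · exact Finset.erase_subset_erase _ (Finset.subset_univ s)
            · intro j hj hjn
              have : u j = 0 := by
                by_contra huj
                exact hjn (Finset.mem_erase.mpr ⟨(Finset.mem_erase.mp hj).1,
                  by simp [hs, huj]⟩)
              simp [this]
        _ ≤ ∑ j ∈ s.erase j₀, M * ‖u j₀‖ := by
            refine Finset.sum_le_sum fun j hj => ?_
            rw [norm_mul]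
            have hjne : j₀ ≠ j := fun e => (Finset.mem_erase.mp hj).1 e.symm
            have h1 := hMle j₀ j hjne
            have h2 := hj₀max j (Finset.mem_of_mem_erase hj)
            calc ‖u j‖ * ‖(inner 𝕂 (τ j₀) (τ j) : 𝕂)‖ ≤ ‖u j₀‖ * M :=
                  mul_le_mul h2 h1 (norm_nonneg _) (le_of_lt ha)
              _ = M * ‖u j₀‖ := mul_comm _ _
        _ = ((s.erase j₀).card : ℝ) * (M * ‖u j₀‖) := by
            rw [Finset.sum_const, nsmul_eq_mul]
        _ = ((s.card : ℝ) - 1) * (M * ‖u j₀‖) := by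
            rw [Finset.card_erase_of_mem hj₀s, Nat.cast_sub (Finset.card_pos.mpr ⟨j₀, hj₀s⟩),
              Nat.cast_one]
    have h1M : 1 ≤ ((s.card : ℝ) - 1) * M := by
      have := hbound
      nlinarith [ha]
    have : 1 / M ≤ (s.card : ℝ) - 1 := by
      rw [div_le_iff₀ hM0]
      linarith [h1M]
    linarith
  -- main argument
  intro d hd hne
  set u : Fin n → 𝕂 := d - c with hudef
  have hu : (∑ j, u j • τ j) = 0 := by
    simp only [hudef, Pi.sub_apply, sub_smul, Finset.sum_sub_distrib]
    rw [← hc, ← hd, sub_self]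
  have hune : u ≠ 0 := sub_ne_zero.mpr hne
  have hcardu := key u hu hune
  have hcc : Nat.card {j : Fin n // c j ≠ 0} = (Finset.univ.filter (fun j => c j ≠ 0)).card := by
    rw [Nat.card_eq_fintype_card, Fintype.card_subtype]
  have hcd : Nat.card {j : Fin n // d j ≠ 0} = (Finset.univ.filter (fun j => d j ≠ 0)).card := by
    rw [Nat.card_eq_fintype_card, Fintype.card_subtype]
  have hsub : (Finset.univ.filter (fun j => u j ≠ 0)) ⊆
      (Finset.univ.filter (fun j => c j ≠ 0)) ∪ (Finset.univ.filter (fun j => d j ≠ 0)) := by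
    intro j hj
    simp only [Finset.mem_filter, Finset.mem_union, Finset.mem_univ, true_and] at hj ⊢
    by_contra h'
    push_neg at h'
    exact hj (by simp [hudef, h'.1, h'.2])
  have hcardle : ((Finset.univ.filter (fun j => u j ≠ 0)).card : ℝ) ≤
      ((Finset.univ.filter (fun j => c j ≠ 0)).card : ℝ) +
      ((Finset.univ.filter (fun j => d j ≠ 0)).card : ℝ) := by
    have := (Finset.card_le_card hsub).trans (Finset.card_union_le _ _)
    exact_mod_cast this
  rw [hcc, hcd]
  rw [hcc] at hsparse
  have : ((Finset.univ.filter (fun j => c j ≠ 0)).card : ℝ) <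
      ((Finset.univ.filter (fun j => d j ≠ 0)).card : ℝ) := by linarith
  exact_mod_cast this
end
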